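/- arXiv:1903.03052 — 7 statements merged into one kernel-verified Lean document; each statement's English description precedes it below -/
import Mathlib

section
/- Let H be a connected finite simple graph and f : 𝒦_H → ℕ a function such that every edge of H belongs to some complete subgraph K of H with f(K) ≥ 1. Then the bipartization B_f(H) is a connected graph. -/
/-- `K` is the vertex set of a (nonempty) complete subgraph (clique) of `H`. -/
def IsCliqueF {V : Type*} (H : SimpleGraph V) (K : Finset V) : Prop :=
  K.Nonempty ∧ ∀ x ∈ K, ∀ y ∈ K, x ≠ y → H.Adj x y

instance {V : Type*} [DecidableEq V] (H : SimpleGraph V) [DecidableRel H.Adj] :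
    DecidablePred (IsCliqueF H) := fun K => by
  unfold IsCliqueF; infer_instance

/-- The family `𝒦_H` of all complete subgraphs (cliques) of `H`. -/
abbrev CliqueSet {V : Type*} (H : SimpleGraph V) := {K : Finset V // IsCliqueF H K}

/-- The vertex type of the bipartization `B_f(H)`: the partite set `A` is `V_H`
(the `Sum.inl` part) and the partite set `B` is `⋃_K 𝓕_K`, where
`𝓕_K = {(K,1),…,(K,f K)}` is encoded as `Σ K, Fin (f K)` (the `Sum.inr` part). -/
abbrev BVert {V : Type*} (H : SimpleGraph V) (f : Finset V → ℕ) :=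
  V ⊕ (Σ K : CliqueSet H, Fin (f K.1))

/-- The bipartization `B_f(H)` of `H` with respect to `f`: a vertex `x ∈ A` is
adjacent to `(K, i) ∈ B` iff `x` is a vertex of `K`. -/
def Bip {V : Type*} (H : SimpleGraph V) (f : Finset V → ℕ) : SimpleGraph (BVert H f) where
  Adj a b :=
    (∃ (x : V) (p : Σ K : CliqueSet H, Fin (f K.1)),
        a = Sum.inl x ∧ b = Sum.inr p ∧ x ∈ p.1.1) ∨
    (∃ (x : V) (p : Σ K : CliqueSet H, Fin (f K.1)),
        b = Sum.inl x ∧ a = Sum.inr p ∧ x ∈ p.1.1)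
  symm := by
    constructor
    rintro a b (⟨x, p, rfl, rfl, hx⟩ | ⟨x, p, rfl, rfl, hx⟩)
    · exact Or.inr ⟨x, p, rfl, rfl, hx⟩
    · exact Or.inl ⟨x, p, rfl, rfl, hx⟩
  loopless := by
    constructor
    rintro a (⟨x, p, h1, h2, _⟩ | ⟨x, p, h1, h2, _⟩) <;> subst h1 <;> simp at h2

/-- `D` is a dominating set of `G`. -/
def IsDomSet {W : Type*} (G : SimpleGraph W) (D : Set W) : Prop :=
  ∀ v ∉ D, ∃ u ∈ D, G.Adj u v

/-- The domination number `γ(G)`. -/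
noncomputable def domNum {W : Type*} (G : SimpleGraph W) : ℕ :=
  sInf {n | ∃ D : Set W, IsDomSet G D ∧ D.ncard = n}

/-- `C` is a covering (vertex cover) set of `G`. -/
def IsCoverSet {W : Type*} (G : SimpleGraph W) (C : Set W) : Prop :=
  ∀ u v, G.Adj u v → u ∈ C ∨ v ∈ C

/-- The covering number `β(G)`. -/
noncomputable def coverNum {W : Type*} (G : SimpleGraph W) : ℕ :=
  sInf {n | ∃ C : Set W, IsCoverSet G C ∧ C.ncard = n}

/-- A leaf is a vertex of degree one. -/
def IsLeaf {W : Type*} (G : SimpleGraph W) (v : W) : Prop := (G.neighborSet v).ncard = 1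

/-- A support vertex is a vertex adjacent to a leaf. -/
def IsSupport {W : Type*} (G : SimpleGraph W) (v : W) : Prop := ∃ u, G.Adj v u ∧ IsLeaf G u

/-- A weak support is a vertex adjacent to exactly one leaf. -/
def IsWeakSupport {W : Type*} (G : SimpleGraph W) (v : W) : Prop :=
  {u | G.Adj v u ∧ IsLeaf G u}.ncard = 1

/-- `S` induces a block of `G`: a maximal connected subgraph without a cutvertex. -/
def IsBlock {W : Type*} (G : SimpleGraph W) (S : Set W) : Prop :=
  S.Nonempty ∧ (G.induce S).Connected ∧
    (∀ v ∈ S, S = {v} ∨ (G.induce (S \ {v})).Connected) ∧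
    ∀ T : Set W, S ⊆ T → (G.induce T).Connected →
      (∀ v ∈ T, T = {v} ∨ (G.induce (T \ {v})).Connected) → S = T
theorem bip_connected {V : Type*} [Fintype V] (H : SimpleGraph V) (f : Finset V → ℕ)
    (hconn : H.Connected)
    (hedge : ∀ u v : V, H.Adj u v → ∃ K : Finset V, IsCliqueF H K ∧ u ∈ K ∧ v ∈ K ∧ 1 ≤ f K) :
    (Bip H f).Connected := by
  have hne : Nonempty V := hconn.nonempty
  rw [SimpleGraph.connected_iff]
  refine ⟨?_, ⟨Sum.inl (Classical.arbitrary V)⟩⟩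
  have key : ∀ x y : V, H.Adj x y → (Bip H f).Reachable (Sum.inl x) (Sum.inl y) := by
    intro x y hxy
    obtain ⟨K, hK, hx, hy, hf⟩ := hedge x y hxy
    set p : Σ K : CliqueSet H, Fin (f K.1) := ⟨⟨K, hK⟩, ⟨0, hf⟩⟩ with hp
    have h1 : (Bip H f).Adj (Sum.inl x) (Sum.inr p) := Or.inl ⟨x, p, rfl, rfl, hx⟩
    have h2 : (Bip H f).Adj (Sum.inr p) (Sum.inl y) := Or.inr ⟨y, p, rfl, rfl, hy⟩
    exact h1.reachable.trans h2.reachable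
  have keyR : ∀ x y : V, (Bip H f).Reachable (Sum.inl x) (Sum.inl y) := by
    intro x y
    obtain ⟨w⟩ := hconn.preconnected x y
    induction w with
    | nil => exact SimpleGraph.Reachable.refl _
    | cons h _ ih => exact (key _ _ h).trans ih
  have keyB : ∀ p : Σ K : CliqueSet H, Fin (f K.1),
      ∃ z : V, z ∈ p.1.1 ∧ (Bip H f).Adj (Sum.inl z) (Sum.inr p) := by
    intro p
    obtain ⟨z, hz⟩ := p.1.2.1
    exact ⟨z, hz, Or.inl ⟨z, p, rfl, rfl, hz⟩⟩
  rintro (x | p) (y | q)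
  · exact keyR x y
  · obtain ⟨z, _, hz⟩ := keyB q
    exact (keyR x z).trans hz.reachable
  · obtain ⟨z, _, hz⟩ := keyB p
    exact hz.symm.reachable.trans (keyR z y)
  · obtain ⟨z, _, hz⟩ := keyB p
    obtain ⟨w, _, hw⟩ := keyB q
    exact hz.symm.reachable.trans ((keyR z w).trans hw.reachable)
end

section
/- For every finite bipartite graph G = ((A,B),E_G) there exist a finite simple graph H and a function f : 𝒦_H → ℕ such that G is isomorphic to the bipartization B_f(H) of H with respect to f. -/
section AuxBip

open Classical

variable (W : Type) [Fintype W] (G : SimpleGraph W) (A B : Set W)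

/-- Predicate for the `A`-side: in `A` or isolated. -/
def pAside (w : W) : Prop := w ∈ A ∨ ∀ x, ¬ G.Adj w x

/-- The vertex type for `H`. -/
def Uty : Type := {w : W // pAside W G A w}

noncomputable instance : Fintype (Uty W G A) := by
  unfold Uty; exact Subtype.fintype _

/-- The graph `H`. -/
def Hgr : SimpleGraph (Uty W G A) where
  Adj u v := u ≠ v ∧ ∃ b, b ∈ B ∧ G.Adj u.1 b ∧ G.Adj v.1 b
  symm := by constructor; rintro u v ⟨h, b, hb, h1, h2⟩; exact ⟨h.symm, b, hb, h2, h1⟩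
  loopless := by constructor; rintro u ⟨h, _⟩; exact h rfl

/-- Non-isolated vertices of `B`. -/
def Bty : Type := {w : W // w ∈ B ∧ ∃ x, G.Adj w x}

noncomputable instance : Fintype (Bty W G B) := by
  unfold Bty; exact Subtype.fintype _

/-- The clique associated to a non-isolated `B`-vertex. -/
noncomputable def Kb (b : Bty W G B) : Finset (Uty W G A) :=
  Finset.univ.filter (fun u => G.Adj u.1 b.1)

lemma mem_Kb (b : Bty W G B) (u : Uty W G A) : u ∈ Kb W G A B b ↔ G.Adj u.1 b.1 := by
  simp [Kb]

/-- The multiplicity function. -/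
noncomputable def fmul (K : Finset (Uty W G A)) : ℕ :=
  Fintype.card {b : Bty W G B // Kb W G A B b = K}

end AuxBip

theorem bipartite_is_bipartization (W : Type) [Fintype W] (G : SimpleGraph W) (A B : Set W)
    (hdisj : Disjoint A B) (hcover : A ∪ B = Set.univ)
    (hbip : ∀ u v : W, G.Adj u v → (u ∈ A ∧ v ∈ B) ∨ (u ∈ B ∧ v ∈ A)) :
    ∃ (U : Type) (_ : Fintype U) (H : SimpleGraph U) (f : Finset U → ℕ),
      Nonempty (G ≃g Bip H f) := by
  classical
  -- every neighbor of a `B`-vertex lies in `A`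
  have hnbr : ∀ (b : Bty W G B) (w : W), G.Adj w b.1 → w ∈ A := by
    rintro b w hw
    rcases hbip w b.1 hw with ⟨h1, _⟩ | ⟨h1, h2⟩
    · exact h1
    · exact absurd (Set.disjoint_left.mp hdisj h2 b.2.1) (fun h => h)
  have hclique : ∀ b : Bty W G B, IsCliqueF (Hgr W G A B) (Kb W G A B b) := by
    intro b
    constructor
    · obtain ⟨x, hx⟩ := b.2.2
      have hx' : G.Adj x b.1 := hx.symm
      exact ⟨⟨x, Or.inl (hnbr b x hx')⟩, (mem_Kb W G A B b _).mpr hx'⟩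
    · intro u hu v hv huv
      exact ⟨huv, b.1, b.2.1, (mem_Kb W G A B b u).mp hu, (mem_Kb W G A B b v).mp hv⟩
  set f : Finset (Uty W G A) → ℕ := fmul W G A B with hf
  refine ⟨Uty W G A, inferInstance, Hgr W G A B, f, ⟨?_⟩⟩
  set g : Bty W G B → CliqueSet (Hgr W G A B) := fun b => ⟨Kb W G A B b, hclique b⟩ with hg
  have eFib : ∀ K : CliqueSet (Hgr W G A B), {b : Bty W G B // g b = K} ≃ Fin (f K.1) := by
    intro K
    refine Fintype.equivFinOfCardEq ?_
    have : f K.1 = Fintype.card {b : Bty W G B // Kb W G A B b = K.1} := by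
      rw [hf]; unfold fmul; congr!
    rw [this]
    exact Fintype.card_congr (Equiv.subtypeEquivRight (fun b => by
      simp [hg, Subtype.ext_iff]))
  let eB : Bty W G B ≃ Σ K : CliqueSet (Hgr W G A B), Fin (f K.1) :=
    (Equiv.sigmaFiberEquiv g).symm.trans (Equiv.sigmaCongrRight eFib)
  have heB : ∀ b : Bty W G B, (eB b).1 = g b := fun b => rfl
  have hC : ∀ w : W, ¬ pAside W G A w ↔ (w ∈ B ∧ ∃ x, G.Adj w x) := by
    intro w
    unfold pAside
    push_neg
    constructor
    · rintro ⟨h1, x, hx⟩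
      refine ⟨?_, x, hx⟩
      have : w ∈ A ∪ B := hcover ▸ Set.mem_univ w
      rcases this with h | h
      · exact absurd h h1
      · exact h
    · rintro ⟨h1, x, hx⟩
      exact ⟨fun h => Set.disjoint_left.mp hdisj h h1, x, hx⟩
  let eC : {w : W // ¬ pAside W G A w} ≃ Bty W G B :=
    Equiv.subtypeEquivRight hC
  let e : W ≃ BVert (Hgr W G A B) f :=
    (Equiv.sumCompl (pAside W G A)).symm.trans
      (Equiv.sumCongr (Equiv.refl (Uty W G A)) (eC.trans eB))
  have he_pos : ∀ (w : W) (h : pAside W G A w), e w = Sum.inl ⟨w, h⟩ := by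
    intro w h
    simp only [e, Equiv.trans_apply, Equiv.sumCompl_symm_apply_of_pos h,
      Equiv.sumCongr_apply, Sum.map_inl, Equiv.refl_apply]
    rfl
  have he_neg : ∀ (w : W) (h : ¬ pAside W G A w),
      e w = Sum.inr (eB (eC ⟨w, h⟩)) := by
    intro w h
    simp only [e, Equiv.trans_apply, Equiv.sumCompl_symm_apply_of_neg h,
      Equiv.sumCongr_apply, Sum.map_inr, Equiv.trans_apply]
    rfl
  have hadjAA : ∀ u v : W, pAside W G A u → pAside W G A v → ¬ G.Adj u v := by
    intro u v hu hv hadj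
    have hu' : u ∈ A := by
      rcases hu with h | h
      · exact h
      · exact absurd hadj (h v)
    have hv' : v ∈ A := by
      rcases hv with h | h
      · exact h
      · exact absurd hadj.symm (h u)
    rcases hbip u v hadj with ⟨_, h2⟩ | ⟨h1, _⟩
    · exact Set.disjoint_left.mp hdisj hv' h2
    · exact Set.disjoint_left.mp hdisj hu' h1
  have hadjBB : ∀ u v : W, ¬ pAside W G A u → ¬ pAside W G A v → ¬ G.Adj u v := by
    intro u v hu hv hadj
    have hu' := ((hC u).mp hu).1
    have hv' := ((hC v).mp hv).1
    rcases hbip u v hadj with ⟨h1, _⟩ | ⟨_, h2⟩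
    · exact Set.disjoint_left.mp hdisj h1 hu'
    · exact Set.disjoint_left.mp hdisj h2 hv'
  refine ⟨e, ?_⟩
  intro a b
  by_cases ha : pAside W G A a <;> by_cases hb : pAside W G A b
  · rw [he_pos a ha, he_pos b hb]
    simp only [Bip]
    constructor
    · rintro (⟨x, p, _, h2, _⟩ | ⟨x, p, h1, h2, _⟩) <;> simp_all
    · intro h; exact absurd h (hadjAA a b ha hb)
  · rw [he_pos a ha, he_neg b hb]
    have hb1 : (eC ⟨b, hb⟩).1 = b := rfl
    constructor
    · rintro (⟨x, p, h1, h2, hx⟩ | ⟨x, p, h1, h2, hx⟩)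
      · have hx1 : (⟨a, ha⟩ : Uty W G A) = x := Sum.inl.inj h1
        have hp : eB (eC ⟨b, hb⟩) = p := Sum.inr.inj h2
        rw [← hp] at hx
        have h3 : (eB (eC ⟨b, hb⟩)).1 = g (eC ⟨b, hb⟩) := heB _
        rw [h3] at hx
        rw [← hx1] at hx
        exact (mem_Kb W G A B (eC ⟨b, hb⟩) ⟨a, ha⟩).mp hx
      · simp at h2
    · intro hadj
      refine Or.inl ⟨⟨a, ha⟩, eB (eC ⟨b, hb⟩), rfl, rfl, ?_⟩
      have h1 : (eB (eC ⟨b, hb⟩)).1 = g (eC ⟨b, hb⟩) := heB _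
      rw [h1]
      exact (mem_Kb W G A B (eC ⟨b, hb⟩) ⟨a, ha⟩).mpr (by rw [hb1]; exact hadj)
  · rw [he_neg a ha, he_pos b hb]
    have ha1 : (eC ⟨a, ha⟩).1 = a := rfl
    constructor
    · rintro (⟨x, p, h1, h2, hx⟩ | ⟨x, p, h1, h2, hx⟩)
      · simp at h1
      · have hx1 : (⟨b, hb⟩ : Uty W G A) = x := Sum.inl.inj h1
        have hp : eB (eC ⟨a, ha⟩) = p := Sum.inr.inj h2
        rw [← hp] at hx
        have h3 : (eB (eC ⟨a, ha⟩)).1 = g (eC ⟨a, ha⟩) := heB _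
        rw [h3] at hx
        rw [← hx1] at hx
        exact ((mem_Kb W G A B (eC ⟨a, ha⟩) ⟨b, hb⟩).mp hx).symm
    · intro hadj
      refine Or.inr ⟨⟨b, hb⟩, eB (eC ⟨a, ha⟩), rfl, rfl, ?_⟩
      have h1 : (eB (eC ⟨a, ha⟩)).1 = g (eC ⟨a, ha⟩) := heB _
      rw [h1]
      exact (mem_Kb W G A B (eC ⟨a, ha⟩) ⟨b, hb⟩).mpr (by rw [ha1]; exact hadj.symm)
  · rw [he_neg a ha, he_neg b hb]
    constructor
    · rintro (⟨x, p, h1, h2, _⟩ | ⟨x, p, h1, h2, _⟩) <;> simp_all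
    · intro h; exact absurd h (hadjBB a b ha hb)
end

section
/- Let H be a connected finite simple graph and f : 𝒦_H → ℕ a function. If there exist two vertices u and v of H and two distinct internally vertex-disjoint positively f-valued complete u–v paths in H, then the bipartization B_f(H) contains a cycle. -/
/-- A positively `f`-valued complete `u`–`v` path in `H`: an alternating sequence
`(v₀, F₁, v₁, …, v_{k-1}, F_k, v_k)` of (distinct) vertices and (distinct) complete
subgraphs of `H` with `v₀ = u`, `v_k = v`, such that `v_{i-1}v_i` is an edge of the
complete subgraph `F_i` and `f(F_i) ≥ 1` for every `i = 1, …, k`. -/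
structure CliquePath {V : Type*} (H : SimpleGraph V) (f : Finset V → ℕ) (u v : V) where
  k : ℕ
  verts : Fin (k + 1) → V
  cliques : Fin k → Finset V
  first : verts 0 = u
  last : verts (Fin.last k) = v
  verts_inj : Function.Injective verts
  cliques_inj : Function.Injective cliques
  isClique : ∀ i : Fin k, IsCliqueF H (cliques i)
  pos : ∀ i : Fin k, 1 ≤ f (cliques i)
  mem_left : ∀ i : Fin k, verts i.castSucc ∈ cliques i
  mem_right : ∀ i : Fin k, verts i.succ ∈ cliques i

section Helpers

open SimpleGraph

variable {V : Type*} (H : SimpleGraph V) (f : Finset V → ℕ)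

/-- The expected support list of the walk in `Bip H f` induced by a clique path. -/
def sList : ∀ (n : ℕ) (vs : Fin (n + 1) → V) (cs : Fin n → Finset V),
    (∀ i, IsCliqueF H (cs i)) → (∀ i, 1 ≤ f (cs i)) → List (BVert H f)
  | 0, vs, _, _, _ => [Sum.inl (vs 0)]
  | n + 1, vs, cs, hcl, hpos =>
      Sum.inl (vs 0) :: Sum.inr ⟨⟨cs 0, hcl 0⟩, ⟨0, hpos 0⟩⟩ ::
        sList n (vs ∘ Fin.succ) (cs ∘ Fin.succ) (fun i => hcl i.succ) (fun i => hpos i.succ)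

/-- The walk in `Bip H f` induced by a clique path. -/
def cpWalk : ∀ (n : ℕ) (vs : Fin (n + 1) → V) (cs : Fin n → Finset V)
    (hcl : ∀ i, IsCliqueF H (cs i)) (hpos : ∀ i, 1 ≤ f (cs i)),
    (∀ i, vs i.castSucc ∈ cs i) → (∀ i, vs i.succ ∈ cs i) →
    (Bip H f).Walk (Sum.inl (vs 0)) (Sum.inl (vs (Fin.last n)))
  | 0, _, _, _, _, _, _ => SimpleGraph.Walk.nil
  | n + 1, vs, cs, hcl, hpos, hl, hr =>
      SimpleGraph.Walk.cons
        (Or.inl ⟨vs 0, ⟨⟨cs 0, hcl 0⟩, ⟨0, hpos 0⟩⟩, rfl, rfl, by simpa using hl 0⟩)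
        (SimpleGraph.Walk.cons
          (Or.inr ⟨vs (Fin.succ 0), ⟨⟨cs 0, hcl 0⟩, ⟨0, hpos 0⟩⟩, rfl, rfl, hr 0⟩)
          ((cpWalk n (vs ∘ Fin.succ) (cs ∘ Fin.succ) (fun i => hcl i.succ)
              (fun i => hpos i.succ)
              (fun i => by simpa only [Function.comp_apply, Fin.succ_castSucc] using hl i.succ)
              (fun i => hr i.succ)).copy rfl
            (by simp [Function.comp, Fin.succ_last])))

lemma cpWalk_support : ∀ (n : ℕ) (vs : Fin (n + 1) → V) (cs : Fin n → Finset V)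
    (hcl : ∀ i, IsCliqueF H (cs i)) (hpos : ∀ i, 1 ≤ f (cs i))
    (hl : ∀ i, vs i.castSucc ∈ cs i) (hr : ∀ i, vs i.succ ∈ cs i),
    (cpWalk H f n vs cs hcl hpos hl hr).support = sList H f n vs cs hcl hpos
  | 0, vs, cs, hcl, hpos, hl, hr => by simp [cpWalk, sList]
  | n + 1, vs, cs, hcl, hpos, hl, hr => by
      simp only [cpWalk, sList]
      erw [SimpleGraph.Walk.support_cons, SimpleGraph.Walk.support_cons, SimpleGraph.Walk.support_copy, cpWalk_support]

lemma sList_length : ∀ (n : ℕ) (vs : Fin (n + 1) → V) (cs : Fin n → Finset V)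
    (hcl : ∀ i, IsCliqueF H (cs i)) (hpos : ∀ i, 1 ≤ f (cs i)),
    (sList H f n vs cs hcl hpos).length = 2 * n + 1
  | 0, vs, cs, hcl, hpos => by simp [sList]
  | n + 1, vs, cs, hcl, hpos => by
      simp only [sList, List.length_cons]
      rw [sList_length]
      omega

lemma mem_sList_inl : ∀ (n : ℕ) (vs : Fin (n + 1) → V) (cs : Fin n → Finset V)
    (hcl : ∀ i, IsCliqueF H (cs i)) (hpos : ∀ i, 1 ≤ f (cs i)) (y : V),
    Sum.inl y ∈ sList H f n vs cs hcl hpos ↔ ∃ i, vs i = y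
  | 0, vs, cs, hcl, hpos, y => by
      simp only [sList, List.mem_singleton]
      constructor
      · rintro h
        exact ⟨0, (Sum.inl.inj h).symm⟩
      · rintro ⟨i, rfl⟩
        have : i = 0 := Fin.fin_one_eq_zero i
        rw [this]
  | n + 1, vs, cs, hcl, hpos, y => by
      simp only [sList, List.mem_cons]
      rw [mem_sList_inl]
      constructor
      · rintro (h | h | ⟨i, hi⟩)
        · exact ⟨0, (Sum.inl.inj h).symm⟩
        · simp at h
        · exact ⟨i.succ, hi⟩
      · rintro ⟨i, rfl⟩
        refine i.cases ?_ ?_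
        · exact Or.inl rfl
        · intro j
          exact Or.inr (Or.inr ⟨j, rfl⟩)

lemma mem_sList_inr : ∀ (n : ℕ) (vs : Fin (n + 1) → V) (cs : Fin n → Finset V)
    (hcl : ∀ i, IsCliqueF H (cs i)) (hpos : ∀ i, 1 ≤ f (cs i))
    (P : Σ K : CliqueSet H, Fin (f K.1)),
    Sum.inr P ∈ sList H f n vs cs hcl hpos → ∃ i, cs i = P.1.1
  | 0, vs, cs, hcl, hpos, P => by
      simp [sList]
  | n + 1, vs, cs, hcl, hpos, P => by
      simp only [sList, List.mem_cons]
      rintro (h | h | h)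
      · simp at h
      · exact ⟨0, congrArg (fun x => x.1.1) (Sum.inr.inj h).symm⟩
      · obtain ⟨i, hi⟩ := mem_sList_inr n _ _ _ _ P h
        exact ⟨i.succ, hi⟩

lemma sList_nodup : ∀ (n : ℕ) (vs : Fin (n + 1) → V) (cs : Fin n → Finset V)
    (hcl : ∀ i, IsCliqueF H (cs i)) (hpos : ∀ i, 1 ≤ f (cs i)),
    Function.Injective vs → Function.Injective cs →
    (sList H f n vs cs hcl hpos).Nodup
  | 0, vs, cs, hcl, hpos, hv, hc => by simp [sList]
  | n + 1, vs, cs, hcl, hpos, hv, hc => by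
      simp only [sList, List.nodup_cons, List.mem_cons]
      refine ⟨?_, ?_, ?_⟩
      · rintro (h | h)
        · simp at h
        · obtain ⟨i, hi⟩ := (mem_sList_inl H f n _ _ _ _ _).mp h
          exact Fin.succ_ne_zero i (hv hi)
      · intro h
        obtain ⟨i, hi⟩ := mem_sList_inr H f n _ _ _ _ _ h
        exact Fin.succ_ne_zero i (hc hi)
      · exact sList_nodup n _ _ _ _
          (hv.comp (Fin.succ_injective _)) (hc.comp (Fin.succ_injective _))

lemma sList_inj : ∀ (n : ℕ) (vs vs' : Fin (n + 1) → V) (cs cs' : Fin n → Finset V)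
    (hcl : ∀ i, IsCliqueF H (cs i)) (hpos : ∀ i, 1 ≤ f (cs i))
    (hcl' : ∀ i, IsCliqueF H (cs' i)) (hpos' : ∀ i, 1 ≤ f (cs' i)),
    sList H f n vs cs hcl hpos = sList H f n vs' cs' hcl' hpos' →
    vs = vs' ∧ cs = cs'
  | 0, vs, vs', cs, cs', hcl, hpos, hcl', hpos', h => by
      simp only [sList, List.cons.injEq] at h
      refine ⟨funext fun i => ?_, funext fun i => i.elim0⟩
      have h0 : i = 0 := Fin.fin_one_eq_zero i
      rw [h0]
      exact Sum.inl.inj h.1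
  | n + 1, vs, vs', cs, cs', hcl, hpos, hcl', hpos', h => by
      simp only [sList, List.cons.injEq] at h
      obtain ⟨h1, h2, h3⟩ := h
      have hv0 : vs 0 = vs' 0 := Sum.inl.inj h1
      have hc0 : cs 0 = cs' 0 :=
        congrArg (fun x => x.1.1) (Sum.inr.inj h2)
      obtain ⟨hv, hc⟩ := sList_inj n _ _ _ _ _ _ _ _ h3
      constructor
      · funext i
        refine i.cases hv0 ?_
        intro j
        exact congrFun hv j
      · funext i
        refine i.cases hc0 ?_
        intro j
        exact congrFun hc j

end Helpers

theorem bip_contains_cycle_of_two_paths {V : Type*} [Fintype V]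
    (H : SimpleGraph V) (f : Finset V → ℕ) (hconn : H.Connected) (u v : V)
    (p q : CliquePath H f u v) (hpq : p ≠ q)
    (hdisj : ∀ (i : Fin (p.k + 1)) (j : Fin (q.k + 1)),
      p.verts i = q.verts j → p.verts i = u ∨ p.verts i = v) :
    ¬ (Bip H f).IsAcyclic := by
  intro hac
  clear hdisj
  rcases eq_or_ne u v with huv | huv
  · -- if u = v, both paths have length 0 and must coincide
    apply hpq
    have hk : ∀ r : CliquePath H f u v, r.k = 0 := by
      intro r
      have h0 : r.verts 0 = r.verts (Fin.last r.k) := by rw [r.first, r.last, huv]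
      have := congrArg Fin.val (r.verts_inj h0)
      simpa using this.symm
    have hkp := hk p
    have hkq := hk q
    obtain ⟨kp, vp, cp, fp, lp, ivp, icp, clp, pp, mlp, mrp⟩ := p
    obtain ⟨kq, vq, cq, fq, lq, ivq, icq, clq, pq', mlq, mrq⟩ := q
    simp only at hkp hkq
    subst hkp hkq
    have hv : vp = vq := by
      funext i
      have h0 : i = 0 := Fin.fin_one_eq_zero i
      rw [h0, fp, fq]
    have hc : cp = cq := funext fun i => i.elim0
    subst hv hc
    rfl
  · obtain ⟨kp, vp, cp, fp, lp, ivp, icp, clp, pp, mlp, mrp⟩ := p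
    obtain ⟨kq, vq, cq, fq, lq, ivq, icq, clq, pq', mlq, mrq⟩ := q
    let wp : (Bip H f).Walk (Sum.inl u) (Sum.inl v) :=
      (cpWalk H f kp vp cp clp pp mlp mrp).copy
        (congrArg Sum.inl fp) (congrArg Sum.inl lp)
    let wq : (Bip H f).Walk (Sum.inl u) (Sum.inl v) :=
      (cpWalk H f kq vq cq clq pq' mlq mrq).copy
        (congrArg Sum.inl fq) (congrArg Sum.inl lq)
    have hwp : wp.IsPath := by
      apply SimpleGraph.Walk.IsPath.mk'
      rw [SimpleGraph.Walk.support_copy, cpWalk_support]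
      exact sList_nodup H f kp vp cp clp pp ivp icp
    have hwq : wq.IsPath := by
      apply SimpleGraph.Walk.IsPath.mk'
      rw [SimpleGraph.Walk.support_copy, cpWalk_support]
      exact sList_nodup H f kq vq cq clq pq' ivq icq
    have hPQ : (⟨wp, hwp⟩ : (Bip H f).Path (Sum.inl u) (Sum.inl v)) = ⟨wq, hwq⟩ :=
      (SimpleGraph.isAcyclic_iff_path_unique.mp hac) _ _
    have hw : wp = wq := congrArg Subtype.val hPQ
    have hsupp : sList H f kp vp cp clp pp = sList H f kq vq cq clq pq' := by
      have := congrArg SimpleGraph.Walk.support hw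
      rwa [show wp.support = sList H f kp vp cp clp pp from by
            rw [SimpleGraph.Walk.support_copy, cpWalk_support],
          show wq.support = sList H f kq vq cq clq pq' from by
            rw [SimpleGraph.Walk.support_copy, cpWalk_support]] at this
    have hk : kp = kq := by
      have := congrArg List.length hsupp
      rw [sList_length, sList_length] at this
      omega
    subst hk
    obtain ⟨hv, hc⟩ := sList_inj H f kp vp vq cp cq clp pp clq pq' hsupp
    subst hv hc
    exact hpq rfl
end

section
/- Let G = ((A,B),E_G) be a connected finite bipartite graph with 1 ≤ |A| ≤ |B|. Then the following are equivalent: (1) γ(G) = |A|; (2) γ(G) = β(G) = |A|; (3) G has both of the following properties: (a) every support vertex of G belonging to B is a weak support and each of its non-leaf neighbors is a support vertex; (b) whenever x and y are vertices of A that are neither leaves nor support vertices and d_G(x,y) = 2, there exist at least two vertices x̄ and ȳ in B with N_G(x̄) = N_G(ȳ) = {x,y}. -/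
section Aux
variable {W : Type*} (G : SimpleGraph W)

lemma aux_univ_dom : IsDomSet G Set.univ := fun v hv => absurd (Set.mem_univ v) hv

lemma aux_univ_cov : IsCoverSet G Set.univ := fun u _ _ => Or.inl (Set.mem_univ u)

lemma aux_domNum_le {D : Set W} (h : IsDomSet G D) : domNum G ≤ D.ncard :=
  Nat.sInf_le ⟨D, h, rfl⟩

lemma aux_coverNum_le {C : Set W} (h : IsCoverSet G C) : coverNum G ≤ C.ncard :=
  Nat.sInf_le ⟨C, h, rfl⟩

lemma aux_le_domNum {k : ℕ} (h : ∀ D : Set W, IsDomSet G D → k ≤ D.ncard) : k ≤ domNum G :=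
  le_csInf ⟨_, Set.univ, aux_univ_dom G, rfl⟩ (by rintro n ⟨D, hD, rfl⟩; exact h D hD)

lemma aux_exists_min_cover : ∃ C : Set W, IsCoverSet G C ∧ C.ncard = coverNum G := by
  have h : coverNum G ∈ {n | ∃ C : Set W, IsCoverSet G C ∧ C.ncard = n} :=
    Nat.sInf_mem ⟨_, Set.univ, aux_univ_cov G, rfl⟩
  exact h

lemma aux_domNum_le_coverNum (hnbr : ∀ v : W, ∃ u, G.Adj v u) :
    domNum G ≤ coverNum G := by
  obtain ⟨C, hC, hcard⟩ := aux_exists_min_cover G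
  rw [← hcard]
  refine aux_domNum_le G (fun v hv => ?_)
  obtain ⟨u, hu⟩ := hnbr v
  rcases hC v u hu with h | h
  · exact absurd h hv
  · exact ⟨u, h, hu.symm⟩

lemma aux_leaf_nbhd {ℓ v : W} (hl : IsLeaf G ℓ) (ha : G.Adj v ℓ) :
    G.neighborSet ℓ = {v} := by
  obtain ⟨c, hc⟩ := Set.ncard_eq_one.mp hl
  have : v ∈ G.neighborSet ℓ := ha.symm
  rw [hc] at this ⊢
  rw [Set.mem_singleton_iff] at this
  rw [this]

lemma aux_exists_adj (hconn : G.Connected) {v u : W} (hne : v ≠ u) : ∃ w, G.Adj v w := by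
  obtain ⟨p⟩ := hconn v u
  cases p with
  | nil => exact absurd rfl hne
  | cons h _ => exact ⟨_, h⟩

lemma aux_dist_two {x y b : W} (hne : x ≠ y) (hnadj : ¬ G.Adj x y)
    (h1 : G.Adj b x) (h2 : G.Adj b y) : G.dist x y = 2 := by
  have hle : G.dist x y ≤ 2 := by
    have := SimpleGraph.dist_le ((h1.symm.toWalk.append h2.toWalk) : G.Walk x y)
    simpa using this
  have h0 : G.dist x y ≠ 0 := by
    rw [SimpleGraph.dist_ne_zero_iff_ne_and_reachable]
    exact ⟨hne, ⟨h1.symm.toWalk.append h2.toWalk⟩⟩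
  have h1' : G.dist x y ≠ 1 := fun h => hnadj (SimpleGraph.dist_eq_one_iff_adj.mp h)
  omega

lemma aux_common_nbr {x y : W} (h : G.dist x y = 2) : ∃ b, G.Adj b x ∧ G.Adj b y := by
  obtain ⟨p, hp⟩ := SimpleGraph.exists_walk_of_dist_ne_zero (by omega : G.dist x y ≠ 0)
  rw [h] at hp
  cases p with
  | nil => simp at hp
  | cons hadj q =>
    cases q with
    | nil => simp at hp
    | cons hadj2 r =>
      cases r with
      | nil => exact ⟨_, hadj.symm, hadj2⟩
      | cons _ _ => simp [SimpleGraph.Walk.length_cons] at hp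

lemma aux_card_lt [Fintype W] {A : Set W} {x y v : W}
    (hx : x ∈ A) (hy : y ∈ A) (hxy : x ≠ y) (hv : v ∉ A) :
    ((A \ {x, y}) ∪ {v}).ncard < A.ncard := by
  have hsub : ({x, y} : Set W) ⊆ A := by
    intro z hz; rcases hz with rfl | rfl; exacts [hx, hy]
  have h2 : 1 < A.ncard := by
    rw [Set.one_lt_ncard (Set.toFinite A)]
    exact ⟨x, hx, y, hy, hxy⟩
  have hd : (A \ {x, y}).ncard = A.ncard - 2 := by
    rw [Set.ncard_diff hsub, Set.ncard_pair hxy]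
  have hdisj : Disjoint (A \ {x, y}) {v} := by
    rw [Set.disjoint_singleton_right]
    exact fun h => hv h.1
  rw [Set.ncard_union_eq hdisj, hd, Set.ncard_singleton]
  omega

end Aux

theorem domNum_eq_card_tfae {W : Type*} [Fintype W] (G : SimpleGraph W) (A B : Set W)
    (hconn : G.Connected)
    (hdisj : Disjoint A B) (hcover : A ∪ B = Set.univ)
    (hbip : ∀ u v : W, G.Adj u v → (u ∈ A ∧ v ∈ B) ∨ (u ∈ B ∧ v ∈ A))
    (hA : 1 ≤ A.ncard) (hAB : A.ncard ≤ B.ncard) :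
    List.TFAE
      [ domNum G = A.ncard,
        domNum G = A.ncard ∧ coverNum G = A.ncard,
        (∀ v ∈ B, IsSupport G v →
            IsWeakSupport G v ∧ ∀ u : W, G.Adj v u → ¬ IsLeaf G u → IsSupport G u) ∧
        (∀ x ∈ A, ∀ y ∈ A, ¬ IsLeaf G x → ¬ IsSupport G x → ¬ IsLeaf G y → ¬ IsSupport G y →
          G.dist x y = 2 →
          ∃ xb ∈ B, ∃ yb ∈ B, xb ≠ yb ∧
            G.neighborSet xb = {x, y} ∧ G.neighborSet yb = {x, y}) ] := by
  classical
  have hAne : A.Nonempty := Set.nonempty_of_ncard_ne_zero (by omega)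
  have hBne : B.Nonempty := Set.nonempty_of_ncard_ne_zero (by omega)
  have hmem : ∀ v : W, v ∈ A ∨ v ∈ B := fun v => by
    have : v ∈ A ∪ B := hcover ▸ Set.mem_univ v
    exact this
  have hnAB : ∀ {v : W}, v ∈ A → v ∉ B := fun hv => Set.disjoint_left.mp hdisj hv
  have hBA : ∀ {b x : W}, G.Adj b x → x ∈ A → b ∈ B := by
    intro b x h hx
    rcases hbip b x h with ⟨_, hxB⟩ | ⟨hbB, _⟩
    · exact absurd hxB (hnAB hx)
    · exact hbB
  have hAB' : ∀ {b x : W}, G.Adj b x → b ∈ B → x ∈ A := by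
    intro b x h hb
    rcases hbip b x h with ⟨hbA, _⟩ | ⟨_, hxA⟩
    · exact absurd hb (hnAB hbA)
    · exact hxA
  have hnadjA : ∀ {x y : W}, x ∈ A → y ∈ A → ¬ G.Adj x y := by
    intro x y hx hy h
    rcases hbip x y h with ⟨_, hyB⟩ | ⟨hxB, _⟩
    · exact hnAB hy hyB
    · exact hnAB hx hxB
  have hnbr : ∀ v : W, ∃ u, G.Adj v u := by
    intro v
    rcases hmem v with hv | hv
    · obtain ⟨b, hb⟩ := hBne
      exact aux_exists_adj G hconn (fun h : v = b => hnAB hv (h ▸ hb))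
    · obtain ⟨a, ha⟩ := hAne
      exact aux_exists_adj G hconn (fun h : v = a => hnAB (h ▸ ha) hv)
  have hAdom : IsDomSet G A := by
    intro v hv
    obtain ⟨u, hu⟩ := hnbr v
    rcases hbip v u hu with ⟨hvA, _⟩ | ⟨_, huA⟩
    · exact absurd hvA hv
    · exact ⟨u, huA, hu.symm⟩
  have hAcov : IsCoverSet G A := by
    intro u v h
    rcases hbip u v h with ⟨h1, _⟩ | ⟨_, h2⟩
    · exact Or.inl h1
    · exact Or.inr h2
  have hγle : domNum G ≤ A.ncard := aux_domNum_le G hAdom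
  have hβle : coverNum G ≤ A.ncard := aux_coverNum_le G hAcov
  have hγβ : domNum G ≤ coverNum G := aux_domNum_le_coverNum G hnbr
  tfae_have 1 → 2 := fun h => ⟨h, le_antisymm hβle (h ▸ hγβ)⟩
  tfae_have 2 → 1 := And.left
  tfae_have 1 → 3 := by
    intro hγ
    have key : ∀ (x y w : W), x ∈ A → y ∈ A → x ≠ y → w ∈ B →
        IsDomSet G ((A \ {x, y}) ∪ {w}) → False := by
      intro x y w hx hy hxy hw hdom
      have h1 := aux_domNum_le G hdom
      have h2 := aux_card_lt hx hy hxy (fun h => hnAB h hw)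
      omega
    constructor
    · intro v hvB hvsup
      constructor
      · by_contra hw
        have hpos : 0 < {u | G.Adj v u ∧ IsLeaf G u}.ncard := by
          rw [Set.ncard_pos (Set.toFinite _)]
          exact hvsup
        have h2 : 1 < {u | G.Adj v u ∧ IsLeaf G u}.ncard := by
          rcases Nat.lt_or_ge 1 ({u | G.Adj v u ∧ IsLeaf G u}.ncard) with h | h
          · exact h
          · exact absurd (by omega : {u | G.Adj v u ∧ IsLeaf G u}.ncard = 1) hw
        rw [Set.one_lt_ncard (Set.toFinite _)] at h2
        obtain ⟨l1, hl1, l2, hl2, hne⟩ := h2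
        refine key l1 l2 v (hAB' hl1.1 hvB) (hAB' hl2.1 hvB) hne hvB ?_
        intro z hz
        by_cases hzA : z ∈ A
        · have hz2 : z ∈ ({l1, l2} : Set W) := by
            by_contra h
            exact hz (Or.inl ⟨hzA, h⟩)
          rcases hz2 with rfl | rfl
          · exact ⟨v, Or.inr rfl, hl1.1⟩
          · exact ⟨v, Or.inr rfl, hl2.1⟩
        · have hzv : z ≠ v := by
            rintro rfl
            exact hz (Or.inr rfl)
          obtain ⟨u, hu⟩ := hnbr z
          have huA : u ∈ A := hAB' hu (hmem z |>.resolve_left hzA)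
          refine ⟨u, Or.inl ⟨huA, ?_⟩, hu.symm⟩
          intro hmem2
          rcases hmem2 with rfl | rfl
          · have : z ∈ G.neighborSet u := hu.symm
            rw [aux_leaf_nbhd G hl1.2 hl1.1] at this
            exact hzv this
          · have : z ∈ G.neighborSet u := hu.symm
            rw [aux_leaf_nbhd G hl2.2 hl2.1] at this
            exact hzv this
      · intro u huadj hul
        by_contra husup
        obtain ⟨l, hladj, hlleaf⟩ := hvsup
        have hlu : l ≠ u := by rintro rfl; exact hul hlleaf
        refine key l u v (hAB' hladj hvB) (hAB' huadj hvB) hlu hvB ?_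
        intro z hz
        by_cases hzA : z ∈ A
        · have hz2 : z ∈ ({l, u} : Set W) := by
            by_contra h
            exact hz (Or.inl ⟨hzA, h⟩)
          rcases hz2 with rfl | rfl
          · exact ⟨v, Or.inr rfl, hladj⟩
          · exact ⟨v, Or.inr rfl, huadj⟩
        · have hzv : z ≠ v := by rintro rfl; exact hz (Or.inr rfl)
          by_cases hall : ∃ u', G.Adj z u' ∧ u' ∉ ({l, u} : Set W)
          · obtain ⟨u', hu', hu'n⟩ := hall
            have hu'A : u' ∈ A := hAB' hu' (hmem z |>.resolve_left hzA)
            exact ⟨u', Or.inl ⟨hu'A, hu'n⟩, hu'.symm⟩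
          · push_neg at hall
            exfalso
            have hNz : G.neighborSet z = {u} := by
              apply Set.Subset.antisymm
              · intro w hw
                have hw' : G.Adj z w := hw
                rcases hall w hw' with rfl | rfl
                · exfalso
                  have : z ∈ G.neighborSet w := hw'.symm
                  rw [aux_leaf_nbhd G hlleaf hladj] at this
                  exact hzv this
                · rfl
              · intro w hw
                rw [Set.mem_singleton_iff] at hw
                subst hw
                obtain ⟨u0, hu0⟩ := hnbr z
                rcases hall u0 hu0 with rfl | rfl
                · exfalso
                  have : z ∈ G.neighborSet u0 := hu0.symm
                  rw [aux_leaf_nbhd G hlleaf hladj] at this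
                  exact hzv this
                · exact hu0
            have hzleaf : IsLeaf G z := by
              unfold IsLeaf
              rw [hNz, Set.ncard_singleton]
            apply husup
            refine ⟨z, ?_, hzleaf⟩
            have : u ∈ G.neighborSet z := by rw [hNz]; rfl
            exact this.symm
    · intro x hxA y hyA hxl hxs hyl hys hdist
      by_contra hns
      have huniq : ∀ b b', G.neighborSet b = {x, y} → G.neighborSet b' = {x, y} → b = b' := by
        intro b b' hb hb'
        by_contra hne
        apply hns
        have hbadj : G.Adj b x := by
          have : x ∈ G.neighborSet b := by rw [hb]; exact Or.inl rfl
          exact this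
        have hb'adj : G.Adj b' x := by
          have : x ∈ G.neighborSet b' := by rw [hb']; exact Or.inl rfl
          exact this
        exact ⟨b, hBA hbadj hxA, b', hBA hb'adj hxA, hne, hb, hb'⟩
      have hxy : x ≠ y := by
        rintro rfl
        rw [SimpleGraph.dist_self] at hdist
        omega
      have main : ∀ w : W, G.Adj w x → G.Adj w y →
          (∀ z, G.neighborSet z = {x, y} → z = w) → False := by
        intro w hwx hwy huw
        refine key x y w hxA hyA hxy (hBA hwx hxA) ?_
        intro z hz
        by_cases hzA : z ∈ A
        · have hz2 : z ∈ ({x, y} : Set W) := by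
            by_contra h
            exact hz (Or.inl ⟨hzA, h⟩)
          rcases hz2 with rfl | rfl
          · exact ⟨w, Or.inr rfl, hwx⟩
          · exact ⟨w, Or.inr rfl, hwy⟩
        · have hzw : z ≠ w := by rintro rfl; exact hz (Or.inr rfl)
          by_cases hall : ∃ u', G.Adj z u' ∧ u' ∉ ({x, y} : Set W)
          · obtain ⟨u', hu', hu'n⟩ := hall
            have hu'A : u' ∈ A := hAB' hu' (hmem z |>.resolve_left hzA)
            exact ⟨u', Or.inl ⟨hu'A, hu'n⟩, hu'.symm⟩
          · push_neg at hall
            exfalso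
            have hsub : G.neighborSet z ⊆ {x, y} := fun w' hw' => hall w' hw'
            by_cases hxz : x ∈ G.neighborSet z
            · by_cases hyz : y ∈ G.neighborSet z
              · have hNz : G.neighborSet z = {x, y} := by
                  apply Set.Subset.antisymm hsub
                  intro w' hw'
                  rcases hw' with rfl | rfl
                  exacts [hxz, hyz]
                exact hzw (huw z hNz)
              · have hNz : G.neighborSet z = {x} := by
                  apply Set.Subset.antisymm
                  · intro w' hw'
                    rcases hsub hw' with rfl | rfl
                    · rfl
                    · exact absurd hw' hyz
                  · intro w' hw'
                    rw [Set.mem_singleton_iff] at hw'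
                    subst hw'
                    exact hxz
                have : IsLeaf G z := by unfold IsLeaf; rw [hNz, Set.ncard_singleton]
                exact hxs ⟨z, hxz.symm.symm |>.symm, this⟩
            · by_cases hyz : y ∈ G.neighborSet z
              · have hNz : G.neighborSet z = {y} := by
                  apply Set.Subset.antisymm
                  · intro w' hw'
                    rcases hsub hw' with rfl | rfl
                    · exact absurd hw' hxz
                    · rfl
                  · intro w' hw'
                    rw [Set.mem_singleton_iff] at hw'
                    subst hw'
                    exact hyz
                have : IsLeaf G z := by unfold IsLeaf; rw [hNz, Set.ncard_singleton]
                exact hys ⟨z, hyz.symm.symm |>.symm, this⟩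
              · obtain ⟨u0, hu0⟩ := hnbr z
                have hu0' : u0 ∈ G.neighborSet z := hu0
                rcases hsub hu0' with rfl | rfl
                · exact hxz hu0'
                · exact hyz hu0'
      by_cases hex : ∃ b, G.neighborSet b = {x, y}
      · obtain ⟨b0, hb0⟩ := hex
        have hb0x : G.Adj b0 x := by
          have : x ∈ G.neighborSet b0 := by rw [hb0]; exact Or.inl rfl
          exact this
        have hb0y : G.Adj b0 y := by
          have : y ∈ G.neighborSet b0 := by rw [hb0]; exact Or.inr rfl
          exact this
        exact main b0 hb0x hb0y (fun z hz => huniq z b0 hz hb0)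
      · obtain ⟨w0, hw0x, hw0y⟩ := aux_common_nbr G hdist
        exact main w0 hw0x hw0y (fun z hz => absurd ⟨z, hz⟩ hex)
  tfae_have 3 → 1 := by
    rintro ⟨hpa, hpb⟩
    refine le_antisymm hγle (aux_le_domNum G ?_)
    intro D hD
    letI : LinearOrder W := LinearOrder.lift' (Fintype.equivFin W) (Equiv.injective _)
    set SF : W → W → Finset W := fun x y =>
      (Set.toFinite {b | G.neighborSet b = {x, y} ∧ b ∈ D}).toFinset with hSFdef
    have hSFmem : ∀ {x y b : W}, b ∈ SF x y ↔ G.neighborSet b = {x, y} ∧ b ∈ D := by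
      intro x y b
      rw [hSFdef]
      simp only [Set.Finite.mem_toFinset, Set.mem_setOf_eq]
    have hSFcomm : ∀ x y : W, SF x y = SF y x := by
      intro x y
      ext b
      rw [hSFmem, hSFmem, Set.pair_comm x y]
    have hpairD : ∀ {b x y : W}, G.neighborSet b = {x, y} → x ∉ D → y ∉ D → b ∈ D := by
      intro b x y hN hx hy
      by_contra hbD
      obtain ⟨u, huD, hu⟩ := hD b hbD
      have hu2 : u ∈ G.neighborSet b := hu.symm
      rw [hN] at hu2
      rcases hu2 with rfl | rfl
      exacts [hx huD, hy huD]
    obtain ⟨f, e1, e2, e3, e4, e5⟩ :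
        ∃ f : W → W,
          (∀ a (_ : a ∈ D), f a = a) ∧
          (∀ a (h1 : a ∉ D) (h2 : IsSupport G a), f a = h2.choose) ∧
          (∀ a (h1 : a ∉ D) (_ : ¬ IsSupport G a) (_ : IsLeaf G a),
            f a = (hD a h1).choose) ∧
          (∀ a (h1 : a ∉ D) (_ : ¬ IsSupport G a) (_ : ¬ IsLeaf G a)
              (h4 : ∃ y, y ≠ a ∧ (SF a y).Nonempty),
            f a = if a < h4.choose then (SF a h4.choose).min' h4.choose_spec.2
                  else (SF a h4.choose).max' h4.choose_spec.2) ∧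
          (∀ a (h1 : a ∉ D) (_ : ¬ IsSupport G a) (_ : ¬ IsLeaf G a)
              (_ : ¬ ∃ y, y ≠ a ∧ (SF a y).Nonempty), f a = (hD a h1).choose) := by
      refine ⟨fun a =>
        if h1 : a ∈ D then a
        else if h2 : IsSupport G a then h2.choose
        else if _ : IsLeaf G a then (hD a h1).choose
        else if h4 : ∃ y, y ≠ a ∧ (SF a y).Nonempty then
          (if a < h4.choose then (SF a h4.choose).min' h4.choose_spec.2
           else (SF a h4.choose).max' h4.choose_spec.2)
        else (hD a h1).choose, ?_, ?_, ?_, ?_, ?_⟩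
      · intro a h
        simp only [dif_pos h]
      · intro a h1 h2
        simp only [dif_neg h1, dif_pos h2]
      · intro a h1 h2 h3
        simp only [dif_neg h1, dif_neg h2, dif_pos h3]
      · intro a h1 h2 h3 h4
        simp only [dif_neg h1, dif_neg h2, dif_neg h3, dif_pos h4]
      · intro a h1 h2 h3 h4
        simp only [dif_neg h1, dif_neg h2, dif_neg h3, dif_neg h4]
    have hsupfact : ∀ a (h1 : a ∉ D) (h2 : IsSupport G a),
        f a ∈ D ∧ G.neighborSet (f a) = {a} := by
      intro a h1 h2
      rw [e2 a h1 h2]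
      obtain ⟨hadj, hleaf⟩ := h2.choose_spec
      have hN : G.neighborSet h2.choose = {a} := aux_leaf_nbhd G hleaf hadj
      refine ⟨?_, hN⟩
      by_contra hc
      obtain ⟨u, huD, hu⟩ := hD _ hc
      have hu2 : u ∈ G.neighborSet h2.choose := hu.symm
      rw [hN, Set.mem_singleton_iff] at hu2
      rw [hu2] at huD
      exact h1 huD
    have hm4 : ∀ a (h1 : a ∉ D) (h2 : ¬ IsSupport G a) (h3 : ¬ IsLeaf G a)
        (h4 : ∃ y, y ≠ a ∧ (SF a y).Nonempty), f a ∈ SF a h4.choose := by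
      intro a h1 h2 h3 h4
      rw [e4 a h1 h2 h3 h4]
      split_ifs
      · exact Finset.min'_mem _ _
      · exact Finset.max'_mem _ _
    have hcase : ∀ c, c ∈ A → (c ∈ D ∧ f c = c) ∨
        (c ∉ D ∧ f c ∈ D ∧ G.Adj (f c) c ∧
          ((IsSupport G c ∧ G.neighborSet (f c) = {c}) ∨
           (¬ IsSupport G c ∧ IsLeaf G c) ∨
           (¬ IsSupport G c ∧ ¬ IsLeaf G c ∧ (∃ y, y ≠ c ∧ (SF c y).Nonempty)) ∨
           (¬ IsSupport G c ∧ ¬ IsLeaf G c ∧ ¬ (∃ y, y ≠ c ∧ (SF c y).Nonempty)))) := by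
      intro c hc
      by_cases h1 : c ∈ D
      · exact Or.inl ⟨h1, e1 c h1⟩
      refine Or.inr ⟨h1, ?_⟩
      by_cases h2 : IsSupport G c
      · obtain ⟨hfD, hN⟩ := hsupfact c h1 h2
        refine ⟨hfD, ?_, Or.inl ⟨h2, hN⟩⟩
        have hmem2 : c ∈ G.neighborSet (f c) := by rw [hN]; rfl
        exact hmem2
      by_cases h3 : IsLeaf G c
      · rw [e3 c h1 h2 h3]
        obtain ⟨huD, hu⟩ := (hD c h1).choose_spec
        exact ⟨huD, hu, Or.inr (Or.inl ⟨h2, h3⟩)⟩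
      by_cases h4 : ∃ y, y ≠ c ∧ (SF c y).Nonempty
      · have hmem4 := hm4 c h1 h2 h3 h4
        rw [hSFmem] at hmem4
        refine ⟨hmem4.2, ?_, Or.inr (Or.inr (Or.inl ⟨h2, h3, h4⟩))⟩
        have hmem2 : c ∈ G.neighborSet (f c) := by rw [hmem4.1]; exact Or.inl rfl
        exact hmem2
      · rw [e5 c h1 h2 h3 h4]
        obtain ⟨huD, hu⟩ := (hD c h1).choose_spec
        exact ⟨huD, hu, Or.inr (Or.inr (Or.inr ⟨h2, h3, h4⟩))⟩
    have hinj : Set.InjOn f A := by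
      intro a ha a' ha' heq
      rcases hcase a ha with ⟨haD, hfa⟩ | ⟨haD, hfaD, hfadj, hsa⟩
      · rcases hcase a' ha' with ⟨haD', hfa'⟩ | ⟨haD', hfaD', hfadj', hsa'⟩
        · rw [← hfa, ← hfa', heq]
        · exfalso
          have hBm : f a' ∈ B := hBA hfadj' ha'
          rw [← heq, hfa] at hBm
          exact hnAB ha hBm
      rcases hcase a' ha' with ⟨haD', hfa'⟩ | ⟨haD', hfaD', hfadj', hsa'⟩
      · exfalso
        have hBm : f a ∈ B := hBA hfadj ha
        rw [heq, hfa'] at hBm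
        exact hnAB ha' hBm
      by_cases hne : a = a'
      · exact hne
      exfalso
      have hfadj2 : G.Adj (f a) a' := heq ▸ hfadj'
      have hfadj1 : G.Adj (f a') a := heq ▸ hfadj
      rcases hsa with ⟨h2, hNa⟩ | hsa2
      · have hm : a' ∈ G.neighborSet (f a) := hfadj2
        rw [hNa, Set.mem_singleton_iff] at hm
        exact hne hm.symm
      rcases hsa' with ⟨h2', hNa'⟩ | hsa2'
      · have hm : a ∈ G.neighborSet (f a') := hfadj1
        rw [hNa', Set.mem_singleton_iff] at hm
        exact hne hm
      rcases hsa2 with ⟨h2, h3⟩ | hrest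
      · -- a is in the leaf branch
        rcases hsa2' with ⟨h2', h3'⟩ | hrest'
        · -- both leaf branch
          have hbB : f a ∈ B := hBA hfadj ha
          have hbsup : IsSupport G (f a) := ⟨a, hfadj, h3⟩
          have hws := (hpa (f a) hbB hbsup).1
          unfold IsWeakSupport at hws
          obtain ⟨c, hc⟩ := Set.ncard_eq_one.mp hws
          have h1m : a ∈ {u | G.Adj (f a) u ∧ IsLeaf G u} := ⟨hfadj, h3⟩
          have h2m : a' ∈ {u | G.Adj (f a) u ∧ IsLeaf G u} := ⟨hfadj2, h3'⟩
          rw [hc, Set.mem_singleton_iff] at h1m h2m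
          exact hne (h1m.trans h2m.symm)
        · -- a leaf, a' generic
          have hp' : ¬ IsSupport G a' ∧ ¬ IsLeaf G a' := by
            rcases hrest' with ⟨p, q, _⟩ | ⟨p, q, _⟩
            exacts [⟨p, q⟩, ⟨p, q⟩]
          have hbB : f a ∈ B := hBA hfadj ha
          have hbsup : IsSupport G (f a) := ⟨a, hfadj, h3⟩
          exact hp'.1 ((hpa (f a) hbB hbsup).2 a' hfadj2 hp'.2)
      rcases hsa2' with ⟨h2', h3'⟩ | hrest'
      · -- a' leaf, a generic
        have hp : ¬ IsSupport G a ∧ ¬ IsLeaf G a := by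
          rcases hrest with ⟨p, q, _⟩ | ⟨p, q, _⟩
          exacts [⟨p, q⟩, ⟨p, q⟩]
        have hbB : f a' ∈ B := hBA hfadj' ha'
        have hbsup : IsSupport G (f a') := ⟨a', hfadj', h3'⟩
        exact hp.1 ((hpa (f a') hbB hbsup).2 a hfadj1 hp.2)
      -- both a and a' generic
      rcases hrest with ⟨h2, h3, h4⟩ | ⟨h2, h3, h4⟩
      · rcases hrest' with ⟨h2', h3', h4'⟩ | ⟨h2', h3', h4'⟩
        · -- both pair branch
          have hmem := hm4 a haD h2 h3 h4
          rw [hSFmem] at hmem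
          have hmem' := hm4 a' haD' h2' h3' h4'
          rw [hSFmem] at hmem'
          have hpair : ({a, h4.choose} : Set W) = {a', h4'.choose} := by
            rw [← hmem.1, heq, hmem'.1]
          have hay' : a = h4'.choose := by
            have hm : a ∈ ({a', h4'.choose} : Set W) := by
              rw [← hpair]; exact Or.inl rfl
            rcases hm with hm | hm
            · exact absurd hm hne
            · exact hm
          have ha'y : a' = h4.choose := by
            have hm : a' ∈ ({a, h4.choose} : Set W) := by
              rw [hpair]; exact Or.inl rfl
            rcases hm with hm | hm
            · exact absurd hm.symm hne
            · exact hm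
          have hSFeq : SF a h4.choose = SF a' h4'.choose := by
            rw [← ha'y, ← hay', hSFcomm]
          have hdist : G.dist a a' = 2 :=
            aux_dist_two G hne (hnadjA ha ha') hfadj hfadj2
          obtain ⟨xb, _, yb, _, hnexy, hNxb, hNyb⟩ :=
            hpb a ha a' ha' h3 h2 h3' h2' hdist
          have hxb1 : xb ∈ SF a h4.choose := by
            rw [← ha'y]
            exact hSFmem.mpr ⟨hNxb, hpairD hNxb haD haD'⟩
          have hyb1 : yb ∈ SF a h4.choose := by
            rw [← ha'y]
            exact hSFmem.mpr ⟨hNyb, hpairD hNyb haD haD'⟩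
          have hxb2 : xb ∈ SF a' h4'.choose := hSFeq ▸ hxb1
          have hyb2 : yb ∈ SF a' h4'.choose := hSFeq ▸ hyb1
          have ea := e4 a haD h2 h3 h4
          have ea' := e4 a' haD' h2' h3' h4'
          rcases lt_trichotomy a a' with hlt | hq | hlt
          · rw [if_pos (ha'y ▸ hlt)] at ea
            rw [if_neg (by rw [← hay']; exact not_lt.mpr hlt.le)] at ea'
            have l1 : f a ≤ xb := by rw [ea]; exact Finset.min'_le _ xb hxb1
            have l2 : xb ≤ f a' := by rw [ea']; exact Finset.le_max' _ xb hxb2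
            have l3 : f a ≤ yb := by rw [ea]; exact Finset.min'_le _ yb hyb1
            have l4 : yb ≤ f a' := by rw [ea']; exact Finset.le_max' _ yb hyb2
            rw [← heq] at l2 l4
            exact hnexy ((le_antisymm l2 l1).trans (le_antisymm l3 l4))
          · exact hne hq
          · rw [if_neg (by rw [← ha'y]; exact not_lt.mpr hlt.le)] at ea
            rw [if_pos (hay' ▸ hlt)] at ea'
            have l1 : xb ≤ f a := by rw [ea]; exact Finset.le_max' _ xb hxb1
            have l2 : f a' ≤ xb := by rw [ea']; exact Finset.min'_le _ xb hxb2
            have l3 : yb ≤ f a := by rw [ea]; exact Finset.le_max' _ yb hyb1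
            have l4 : f a' ≤ yb := by rw [ea']; exact Finset.min'_le _ yb hyb2
            rw [← heq] at l2 l4
            exact hnexy ((le_antisymm l1 l2).trans (le_antisymm l4 l3))
        · -- a pair branch, a' pairless
          have hmem := hm4 a haD h2 h3 h4
          rw [hSFmem] at hmem
          have hm : a' ∈ G.neighborSet (f a) := hfadj2
          rw [hmem.1] at hm
          rcases hm with hm | hm
          · exact hne hm.symm
          · apply h4'
            refine ⟨a, fun hh => hne hh, ⟨f a, hSFmem.mpr ⟨?_, hfaD⟩⟩⟩
            rw [hmem.1, ← hm, Set.pair_comm]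
      · rcases hrest' with ⟨h2', h3', h4'⟩ | ⟨h2', h3', h4'⟩
        · -- a pairless, a' pair branch
          have hmem' := hm4 a' haD' h2' h3' h4'
          rw [hSFmem] at hmem'
          have hm : a ∈ G.neighborSet (f a') := hfadj1
          rw [hmem'.1] at hm
          rcases hm with hm | hm
          · exact hne hm
          · apply h4
            refine ⟨a', fun hh => hne hh.symm, ⟨f a', hSFmem.mpr ⟨?_, hfaD'⟩⟩⟩
            rw [hmem'.1, ← hm, Set.pair_comm]
        · -- both pairless
          apply h4
          have hdist : G.dist a a' = 2 :=
            aux_dist_two G hne (hnadjA ha ha') hfadj hfadj2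
          obtain ⟨xb, _, yb, _, hnexy, hNxb, hNyb⟩ :=
            hpb a ha a' ha' h3 h2 h3' h2' hdist
          exact ⟨a', fun hh => hne hh.symm,
            ⟨xb, hSFmem.mpr ⟨hNxb, hpairD hNxb haD haD'⟩⟩⟩
    have hmaps : ∀ a ∈ A, f a ∈ D := by
      intro a ha
      rcases hcase a ha with ⟨haD, hfa⟩ | ⟨_, hfaD, _, _⟩
      · rw [hfa]; exact haD
      · exact hfaD
    exact Set.ncard_le_ncard_of_injOn f hmaps hinj (Set.toFinite D)
  tfae_finish
end

section
/- Let G = ((A,B),E_G) be a connected finite bipartite graph with 1 ≤ |A| ≤ |B|. Then γ(G) = |A| if and only if G is (isomorphic to) the bipartization B_f(H) of a connected finite simple graph H with respect to a non-zero function f : 𝒦_H → ℕ satisfying both: (1) whenever uv is an edge of H with f(H[u,v]) = 0, there exists a complete subgraph H′ of H containing the edge uv with f(H′) > 0; and (2) whenever uv is an edge of H with f(H[u]) = f(H[v]) = 0, one has f(H[u,v]) ≥ 2. -/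
section AuxLemmas

open SimpleGraph

/-! ### Generic small helpers -/

lemma singleton_cliqueF {U : Type*} (H : SimpleGraph U) (u : U) : IsCliqueF H {u} := by
  refine ⟨⟨u, Finset.mem_singleton_self u⟩, ?_⟩
  intro x hx y hy hxy
  rw [Finset.mem_singleton] at hx hy
  subst hx; subst hy; exact absurd rfl hxy

lemma pair_cliqueF {U : Type*} [DecidableEq U] {H : SimpleGraph U} {u v : U} (huv : H.Adj u v) :
    IsCliqueF H {u, v} := by
  refine ⟨⟨u, by simp⟩, ?_⟩
  intro x hx y hy hxy
  simp only [Finset.mem_insert, Finset.mem_singleton] at hx hy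
  rcases hx with rfl | rfl <;> rcases hy with rfl | rfl
  · exact absurd rfl hxy
  · exact huv
  · exact huv.symm
  · exact absurd rfl hxy

lemma exists_adj_of_connected {W : Type*} {G : SimpleGraph W} (h : G.Connected)
    {x y : W} (hxy : x ≠ y) : ∃ z, G.Adj x z := by
  obtain ⟨w⟩ := h.preconnected x y
  cases w with
  | nil => exact absurd rfl hxy
  | cons h _ => exact ⟨_, h⟩

lemma ncard_range_inl {U : Type*} [Fintype U] (H : SimpleGraph U) (f : Finset U → ℕ) :
    (Set.range (Sum.inl : U → BVert H f)).ncard = Fintype.card U := by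
  rw [← Set.image_univ, Set.ncard_image_of_injective _ Sum.inl_injective, Set.ncard_univ,
    Nat.card_eq_fintype_card]

/-! ### Invariance of the domination number under isomorphism -/

lemma domSet_mem_map {W W' : Type*} {G : SimpleGraph W} {G' : SimpleGraph W'}
    (e : G ≃g G') {n : ℕ} (hn : n ∈ {n | ∃ D : Set W, IsDomSet G D ∧ D.ncard = n}) :
    n ∈ {n | ∃ D : Set W', IsDomSet G' D ∧ D.ncard = n} := by
  obtain ⟨D, hD, rfl⟩ := hn
  refine ⟨⇑e '' D, ?_, Set.ncard_image_of_injective D e.toEquiv.injective⟩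
  intro v hv
  have hsv : e.symm v ∉ D := fun h => hv ⟨_, h, e.apply_symm_apply v⟩
  obtain ⟨u, hu, hadj⟩ := hD _ hsv
  refine ⟨e u, ⟨u, hu, rfl⟩, ?_⟩
  have := e.map_adj_iff.mpr hadj
  simpa using this

lemma domNum_iso {W W' : Type*} {G : SimpleGraph W} {G' : SimpleGraph W'}
    (e : G ≃g G') : domNum G = domNum G' := by
  unfold domNum
  congr 1
  ext n
  exact ⟨fun h => domSet_mem_map e h, fun h => domSet_mem_map e.symm h⟩

/-! ### Parity / uniqueness of the bipartition along walks -/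

lemma walk_parity {W : Type*} (G : SimpleGraph W) (p q : W → Prop)
    (hp : ∀ x y, G.Adj x y → (p x ↔ ¬ p y)) (hq : ∀ x y, G.Adj x y → (q x ↔ ¬ q y)) :
    ∀ {x y : W}, G.Walk x y → ((p x ↔ p y) ↔ (q x ↔ q y)) := by
  intro x y w
  induction w with
  | nil => tauto
  | cons h w ih => have h1 := hp _ _ h; have h2 := hq _ _ h; tauto

/-- Decode the clique (or singleton) attached to a vertex of `BVert H f`. -/
def bKey {V : Type*} (H : SimpleGraph V) (f : Finset V → ℕ) : BVert H f → Finset V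
  | Sum.inl x => {x}
  | Sum.inr p => p.1.1

/-- Decode the copy-index attached to a vertex of `BVert H f`. -/
def bIdx {V : Type*} (H : SimpleGraph V) (f : Finset V → ℕ) : BVert H f → ℕ
  | Sum.inl _ => 0
  | Sum.inr p => (p.2 : ℕ)

/-! ### Key lemma: any dominating set of `Bip H f` has at least `card U` elements -/

lemma card_le_domset {U : Type*} [Fintype U] [DecidableEq U] (H : SimpleGraph U) (f : Finset U → ℕ)
    (hc2 : ∀ u v : U, H.Adj u v → f {u} = 0 → f {v} = 0 → 2 ≤ f {u, v})
    (D : Set (BVert H f)) (hD : IsDomSet (Bip H f) D) :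
    Fintype.card U ≤ D.ncard := by
  classical
  -- an injective enumeration of `U`
  obtain ⟨g, hg⟩ : ∃ g : U → ℕ, Function.Injective g :=
    ⟨fun u => ((Fintype.equivFin U) u : ℕ),
      fun a b h => (Fintype.equivFin U).injective (Fin.val_injective h)⟩
  -- any pendant vertex all of whose clique-vertices avoid `D` is forced into `D`
  have hforced : ∀ (K : CliqueSet H) (i : Fin (f K.1)),
      (∀ x ∈ K.1, Sum.inl x ∉ D) → (Sum.inr ⟨K, i⟩ : BVert H f) ∈ D := by
    intro K i hK
    by_contra hni
    obtain ⟨w, hw, hadj⟩ := hD _ hni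
    rcases hadj with ⟨x, p, rfl, hp2, hx⟩ | ⟨x, p, hp1, hp2, hx⟩
    · obtain rfl : (⟨K, i⟩ : Σ K : CliqueSet H, Fin (f K.1)) = p := Sum.inr_injective hp2
      exact hK x hx hw
    · exact absurd hp1 (by simp)
  -- every vertex of `U` outside `D` has a dominator on the `Σ` side
  have hdomfun : ∀ u : U, Sum.inl u ∉ D →
      ∃ p : (Σ K : CliqueSet H, Fin (f K.1)), (Sum.inr p : BVert H f) ∈ D ∧ u ∈ p.1.1 := by
    intro u hu
    obtain ⟨w, hw, hadj⟩ := hD _ hu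
    rcases hadj with ⟨x, p, hp1, hp2, hx⟩ | ⟨x, p, hp1, hp2, hx⟩
    · exact absurd hp2 (by simp)
    · obtain rfl : u = x := Sum.inl_injective hp1
      exact ⟨p, hp2 ▸ hw, hx⟩
  choose pfun hpD hpu using hdomfun
  -- the injection `φ`, described by the four-fold case summary `hsum`
  have hsum : ∃ φ : U → BVert H f, ∀ u : U,
      (Sum.inl u ∈ D ∧ φ u = Sum.inl u) ∨
      (∃ (hcl : IsCliqueF H {u}) (hlt : 0 < f {u}),
        Sum.inl u ∉ D ∧ φ u = Sum.inr ⟨⟨{u}, hcl⟩, ⟨0, hlt⟩⟩) ∨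
      (∃ (v : U) (hcl : IsCliqueF H {u, v})
          (hlt : (if g u < g v then 0 else 1) < f {u, v}),
        v ≠ u ∧ Sum.inl u ∉ D ∧ Sum.inl v ∉ D ∧ f {u} = 0 ∧ f {v} = 0 ∧
        φ u = Sum.inr ⟨⟨{u, v}, hcl⟩, ⟨if g u < g v then 0 else 1, hlt⟩⟩) ∨
      (∃ (hu : Sum.inl u ∉ D), f {u} = 0 ∧ φ u = Sum.inr (pfun u hu) ∧
        ¬ ∃ v, v ∈ (pfun u hu).1.1 ∧ v ≠ u ∧ Sum.inl v ∉ D ∧ f {v} = 0) := by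
    refine ⟨fun u =>
      if h : Sum.inl u ∈ D then Sum.inl u
      else if h1 : 0 < f {u} then Sum.inr ⟨⟨{u}, singleton_cliqueF H u⟩, ⟨0, h1⟩⟩
      else if h2 : ∃ v, v ∈ (pfun u h).1.1 ∧ v ≠ u ∧ Sum.inl v ∉ D ∧ f {v} = 0 then
        Sum.inr ⟨⟨{u, h2.choose},
            pair_cliqueF ((pfun u h).1.2.2 u (hpu u h) h2.choose h2.choose_spec.1
              (Ne.symm h2.choose_spec.2.1)).symm.symm⟩,
          ⟨if g u < g h2.choose then 0 else 1, by
            have hb : 2 ≤ f {u, h2.choose} :=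
              hc2 u h2.choose
                ((pfun u h).1.2.2 u (hpu u h) h2.choose h2.choose_spec.1
                  (Ne.symm h2.choose_spec.2.1)).symm.symm
                (Nat.eq_zero_of_not_pos h1) h2.choose_spec.2.2.2
            exact lt_of_lt_of_le (by split <;> omega) hb⟩⟩
      else Sum.inr (pfun u h), ?_⟩
    intro u
    by_cases h : Sum.inl u ∈ D
    · exact Or.inl ⟨h, dif_pos h⟩
    · by_cases h1 : 0 < f {u}
      · exact Or.inr (Or.inl ⟨singleton_cliqueF H u, h1, h, by simp only [dif_neg h, dif_pos h1]⟩)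
      · by_cases h2 : ∃ v, v ∈ (pfun u h).1.1 ∧ v ≠ u ∧ Sum.inl v ∉ D ∧ f {v} = 0
        · refine Or.inr (Or.inr (Or.inl ⟨h2.choose, ?_, ?_, h2.choose_spec.2.1, h,
            h2.choose_spec.2.2.1, Nat.eq_zero_of_not_pos h1, h2.choose_spec.2.2.2, ?_⟩))
          · exact pair_cliqueF ((pfun u h).1.2.2 u (hpu u h) h2.choose h2.choose_spec.1
              (Ne.symm h2.choose_spec.2.1)).symm.symm
          · have hb : 2 ≤ f {u, h2.choose} :=
              hc2 u h2.choose
                ((pfun u h).1.2.2 u (hpu u h) h2.choose h2.choose_spec.1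
                  (Ne.symm h2.choose_spec.2.1)).symm.symm
                (Nat.eq_zero_of_not_pos h1) h2.choose_spec.2.2.2
            exact lt_of_lt_of_le (by split <;> omega) hb
          · simp only [dif_neg h, dif_neg h1, dif_pos h2]
        · exact Or.inr (Or.inr (Or.inr ⟨h, Nat.eq_zero_of_not_pos h1,
            by simp only [dif_neg h, dif_neg h1, dif_neg h2], h2⟩))
  obtain ⟨φ, hφ⟩ := hsum
  have hmem : ∀ u, φ u ∈ D := by
    intro u
    rcases hφ u with ⟨h, he⟩ | ⟨hcl, hlt, h, he⟩ | ⟨v, hcl, hlt, hvu, hu, hv, _, _, he⟩ |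
      ⟨hu, _, he, _⟩
    · rw [he]; exact h
    · rw [he]
      refine hforced _ _ ?_
      intro x hx
      rw [Finset.mem_singleton] at hx
      subst hx; exact h
    · rw [he]
      refine hforced _ _ ?_
      intro x hx
      simp only [Finset.mem_insert, Finset.mem_singleton] at hx
      rcases hx with rfl | rfl
      · exact hu
      · exact hv
    · rw [he]; exact hpD u hu
  have hinj : Function.Injective φ := by
    intro u u' heq
    by_cases huu : u = u'
    · exact huu
    rcases hφ u with ⟨h, he⟩ | ⟨hcl, hlt, h, he⟩ | ⟨v, hcl, hlt, hvu, hu2, hv2, hfu, hfv, he⟩ |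
        ⟨hu, hfu, he, hneg⟩ <;>
      rcases hφ u' with ⟨h', he'⟩ | ⟨hcl', hlt', h', he'⟩ |
        ⟨v', hcl', hlt', hvu', hu2', hv2', hfu', hfv', he'⟩ | ⟨hu', hfu', he', hneg'⟩ <;>
      rw [he, he'] at heq
    -- 16 cases
    · exact Sum.inl_injective heq
    · exact absurd heq (by simp)
    · exact absurd heq (by simp)
    · exact absurd heq (by simp)
    · exact absurd heq (by simp)
    · -- singleton / singleton
      have h1 : ({u} : Finset U) = {u'} := by
        have := congrArg (bKey H f) heq; simpa [bKey] using this
      exact Finset.singleton_injective h1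
    · -- singleton / pair
      have h1 : ({u} : Finset U) = {u', v'} := by
        have := congrArg (bKey H f) heq; simpa [bKey] using this
      have : u' ∈ ({u} : Finset U) := by rw [h1]; simp
      rw [Finset.mem_singleton] at this
      exact this.symm
    · -- singleton / dominator
      have h1 : ({u} : Finset U) = (pfun u' hu').1.1 := by
        have := congrArg (bKey H f) heq; simpa [bKey] using this
      have : u' ∈ ({u} : Finset U) := by rw [h1]; exact hpu u' hu'
      rw [Finset.mem_singleton] at this
      exact this.symm
    · exact absurd heq (by simp)
    · -- pair / singleton
      have h1 : ({u, v} : Finset U) = {u'} := by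
        have := congrArg (bKey H f) heq; simpa [bKey] using this
      have : u ∈ ({u'} : Finset U) := by rw [← h1]; simp
      rw [Finset.mem_singleton] at this
      exact this
    · -- pair / pair
      have h1 : ({u, v} : Finset U) = {u', v'} := by
        have := congrArg (bKey H f) heq; simpa [bKey] using this
      have h2 : (if g u < g v then (0:ℕ) else 1) = (if g u' < g v' then 0 else 1) := by
        have := congrArg (bIdx H f) heq; simpa [bIdx] using this
      have hu'mem : u' ∈ ({u, v} : Finset U) := by rw [h1]; simp
      have humem : u ∈ ({u', v'} : Finset U) := by rw [← h1]; simp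
      simp only [Finset.mem_insert, Finset.mem_singleton] at hu'mem humem
      rcases humem with rfl | rfl
      · rfl
      · -- u = v'
        rcases hu'mem with h3 | rfl
        · exact h3.symm
        · -- u' = v, u = v'
          exfalso
          have hne : g u ≠ g u' := fun hc => huu (hg hc)
          rcases lt_trichotomy (g u) (g u') with hlt2 | hlt2 | hlt2
          · rw [if_pos hlt2, if_neg (by omega)] at h2; omega
          · exact hne hlt2
          · rw [if_neg (by omega), if_pos hlt2] at h2; omega
    · -- pair / dominator
      have h1 : ({u, v} : Finset U) = (pfun u' hu').1.1 := by
        have := congrArg (bKey H f) heq; simpa [bKey] using this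
      have hu'mem : u' ∈ ({u, v} : Finset U) := by rw [h1]; exact hpu u' hu'
      simp only [Finset.mem_insert, Finset.mem_singleton] at hu'mem
      rcases hu'mem with rfl | rfl
      · rfl
      · exfalso
        exact hneg' ⟨u, by rw [← h1]; simp, huu, hu2, hfu⟩
    · exact absurd heq (by simp)
    · -- dominator / singleton
      have h1 : (pfun u hu).1.1 = {u'} := by
        have := congrArg (bKey H f) heq; simpa [bKey] using this
      have : u ∈ ({u'} : Finset U) := by rw [← h1]; exact hpu u hu
      rw [Finset.mem_singleton] at this
      exact this
    · -- dominator / pair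
      have h1 : (pfun u hu).1.1 = {u', v'} := by
        have := congrArg (bKey H f) heq; simpa [bKey] using this
      have humem : u ∈ ({u', v'} : Finset U) := by rw [← h1]; exact hpu u hu
      simp only [Finset.mem_insert, Finset.mem_singleton] at humem
      rcases humem with rfl | rfl
      · rfl
      · exfalso
        exact hneg ⟨u', by rw [h1]; simp, fun hc => huu hc.symm, hu2', hfu'⟩
    · -- dominator / dominator
      have h1 : pfun u hu = pfun u' hu' := Sum.inr_injective heq
      exfalso
      refine hneg ⟨u', ?_, fun hc => huu hc.symm, hu', hfu'⟩
      rw [h1]; exact hpu u' hu'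
  calc Fintype.card U = (Set.range φ).ncard := by
        rw [← Set.image_univ, Set.ncard_image_of_injective _ hinj, Set.ncard_univ,
          Nat.card_eq_fintype_card]
    _ ≤ D.ncard := Set.ncard_le_ncard (Set.range_subset_iff.2 hmem) (Set.toFinite D)

/-! ### The domination number of a bipartization -/

lemma domNum_bip {U : Type*} [Fintype U] [DecidableEq U] (H : SimpleGraph U) (f : Finset U → ℕ)
    (hc2 : ∀ u v : U, H.Adj u v → f {u} = 0 → f {v} = 0 → 2 ≤ f {u, v}) :
    domNum (Bip H f) = Fintype.card U := by
  have hdom : IsDomSet (Bip H f) (Set.range Sum.inl) := by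
    rintro v hv
    match v with
    | Sum.inl u => exact absurd ⟨u, rfl⟩ hv
    | Sum.inr ⟨K, i⟩ =>
      obtain ⟨x, hx⟩ := K.2.1
      exact ⟨Sum.inl x, ⟨x, rfl⟩, Or.inl ⟨x, ⟨K, i⟩, rfl, rfl, hx⟩⟩
  have h1 : Fintype.card U ∈ {n | ∃ D, IsDomSet (Bip H f) D ∧ D.ncard = n} :=
    ⟨Set.range Sum.inl, hdom, ncard_range_inl H f⟩
  refine le_antisymm (Nat.sInf_le h1) (le_csInf ⟨_, h1⟩ ?_)
  rintro n ⟨D, hD, rfl⟩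
  exact card_le_domset H f hc2 D hD

/-! ### Forward direction: the construction -/

/-- The graph `H` on the part `A`: two vertices are adjacent if they have a
common neighbour outside `A`. -/
def Htr {W : Type*} (G : SimpleGraph W) (A : Set W) : SimpleGraph ↥A where
  Adj u v := u ≠ v ∧ ∃ b, b ∉ A ∧ G.Adj ↑u b ∧ G.Adj ↑v b
  symm := by constructor; rintro u v ⟨h1, b, hb, h2, h3⟩; exact ⟨h1.symm, b, hb, h3, h2⟩
  loopless := ⟨fun u h => h.1 rfl⟩

/-- The trace of a vertex `b`: the set of its neighbours inside `A`. -/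
noncomputable def trF {W : Type*} [Fintype W] (G : SimpleGraph W) (A : Set W) (b : W) :
    Finset ↥A :=
  letI : Fintype ↥A := A.toFinite.fintype
  letI : DecidablePred (fun u : ↥A => G.Adj ↑u b) := Classical.decPred _
  Finset.univ.filter (fun u => G.Adj ↑u b)

lemma mem_trF {W : Type*} [Fintype W] (G : SimpleGraph W) (A : Set W) (b : W) (u : ↥A) :
    u ∈ trF G A b ↔ G.Adj ↑u b := by
  simp [trF, Finset.mem_filter]

/-- The multiplicity function: `fF K` counts vertices outside `A` whose trace is `K`. -/
noncomputable def fF {W : Type*} [Fintype W] (G : SimpleGraph W) (A : Set W) :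
    Finset ↥A → ℕ :=
  fun K => Nat.card {b : ↥(Aᶜ) // trF G A ↑b = K}

lemma fF_pos {W : Type*} [Fintype W] (G : SimpleGraph W) (A : Set W) {K : Finset ↥A}
    {b : W} (hb : b ∉ A) (htr : trF G A b = K) : 1 ≤ fF G A K := by
  have : Nonempty {b' : ↥(Aᶜ) // trF G A ↑b' = K} := ⟨⟨⟨b, hb⟩, htr⟩⟩
  exact Nat.card_pos

lemma fF_eq_zero {W : Type*} [Fintype W] (G : SimpleGraph W) (A : Set W) {K : Finset ↥A}
    (h : fF G A K = 0) : ∀ b : W, b ∉ A → trF G A b ≠ K := by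
  intro b hb htr
  have := fF_pos G A hb htr
  omega

lemma fF_two_le {W : Type*} [Fintype W] (G : SimpleGraph W) (A : Set W) {K : Finset ↥A}
    {b b' : W} (hb : b ∉ A) (hb' : b' ∉ A) (hne : b ≠ b')
    (htr : trF G A b = K) (htr' : trF G A b' = K) : 2 ≤ fF G A K := by
  have : Nontrivial {c : ↥(Aᶜ) // trF G A ↑c = K} :=
    ⟨⟨⟨⟨b, hb⟩, htr⟩, ⟨⟨b', hb'⟩, htr'⟩, by
      intro hc
      exact hne (congrArg (fun z : {c : ↥(Aᶜ) // trF G A ↑c = K} => (z.1 : W)) hc)⟩⟩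
  exact Finite.one_lt_card_iff_nontrivial.mpr this

/-- Connectivity of the trace graph. -/
lemma Htr_connected {W : Type*} (G : SimpleGraph W) (A B : Set W)
    (hconn : G.Connected) (hdisj : Disjoint A B)
    (hbip : ∀ u v : W, G.Adj u v → (u ∈ A ∧ v ∈ B) ∨ (u ∈ B ∧ v ∈ A))
    (hAne : A.Nonempty) : (Htr G A).Connected := by
  have hBnA : ∀ x, x ∈ B → x ∉ A := fun x hx hxA => (Set.disjoint_left.mp hdisj hxA) hx
  have key : ∀ (n : ℕ) (x y : W) (w : G.Walk x y), w.length = n →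
      ∀ (hx : x ∈ A) (hy : y ∈ A), (Htr G A).Reachable ⟨x, hx⟩ ⟨y, hy⟩ := by
    intro n
    induction n using Nat.strong_induction_on with
    | _ n ih =>
      intro x y w hlen hx hy
      cases w with
      | nil => exact SimpleGraph.Reachable.refl _
      | @cons _ b _ hadj w' =>
        have hbB : b ∉ A := by
          rcases hbip x b hadj with ⟨_, hb⟩ | ⟨hxB, _⟩
          · exact hBnA b hb
          · exact absurd hx (hBnA x hxB)
        cases w' with
        | nil => exact absurd hy hbB
        | @cons _ x' _ hadj2 w'' =>
          have hx'A : x' ∈ A := by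
            rcases hbip b x' hadj2 with ⟨hbA, _⟩ | ⟨_, hx'⟩
            · exact absurd hbA hbB
            · exact hx'
          have hlen2 : w''.length + 2 = n := by
            simp only [SimpleGraph.Walk.length_cons] at hlen
            omega
          have hreach := ih w''.length (by omega) x' y w'' rfl hx'A hy
          by_cases hxx : x = x'
          · have heq : (⟨x, hx⟩ : ↥A) = ⟨x', hx'A⟩ := Subtype.ext hxx
            rw [heq]
            exact hreach
          · refine (SimpleGraph.Adj.reachable ?_).trans hreach
            exact ⟨fun hc => hxx (congrArg Subtype.val hc), b, hbB, hadj, hadj2.symm⟩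
  rw [SimpleGraph.connected_iff]
  refine ⟨?_, ⟨⟨hAne.choose, hAne.choose_spec⟩⟩⟩
  intro u v
  obtain ⟨w⟩ := hconn.preconnected ↑u ↑v
  have := key w.length ↑u ↑v w rfl u.2 v.2
  simpa using this

/-! ### Forward direction -/

lemma forward_dir (W : Type) [Fintype W] (G : SimpleGraph W)
    (A B : Set W) (hconn : G.Connected)
    (hdisj : Disjoint A B) (hcover : A ∪ B = Set.univ)
    (hbip : ∀ u v : W, G.Adj u v → (u ∈ A ∧ v ∈ B) ∨ (u ∈ B ∧ v ∈ A))
    (hA : 1 ≤ A.ncard) (hAB : A.ncard ≤ B.ncard)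
    (hdom : domNum G = A.ncard) :
    ∃ (U : Type) (_ : Fintype U) (_ : DecidableEq U) (H : SimpleGraph U)
      (f : Finset U → ℕ),
      H.Connected ∧
      (∃ K : Finset U, IsCliqueF H K ∧ 1 ≤ f K) ∧
      (∀ u v : U, H.Adj u v → f {u, v} = 0 →
        ∃ K : Finset U, IsCliqueF H K ∧ u ∈ K ∧ v ∈ K ∧ 0 < f K) ∧
      (∀ u v : U, H.Adj u v → f {u} = 0 → f {v} = 0 → 2 ≤ f {u, v}) ∧
      Nonempty (G ≃g Bip H f) := by
  classical
  have hAne : A.Nonempty := Set.nonempty_of_ncard_ne_zero (by omega)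
  have hBne : B.Nonempty := Set.nonempty_of_ncard_ne_zero (by omega)
  have hBnA : ∀ x, x ∈ B → x ∉ A := fun x hx hxA => (Set.disjoint_left.mp hdisj hxA) hx
  have hAcomp : ∀ x, x ∉ A → x ∈ B := by
    intro x hx
    have hx2 : x ∈ A ∪ B := hcover ▸ Set.mem_univ x
    simp only [Set.mem_union] at hx2
    tauto
  have hBnb : ∀ b, b ∉ A → ∃ a : ↥A, G.Adj ↑a b := by
    intro b hb
    obtain ⟨a0, ha0⟩ := hAne
    have hba : b ≠ a0 := fun hc => hb (hc ▸ ha0)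
    obtain ⟨z, hz⟩ := exists_adj_of_connected hconn hba
    rcases hbip b z hz with ⟨hbA, _⟩ | ⟨_, hzA⟩
    · exact absurd hbA hb
    · exact ⟨⟨z, hzA⟩, hz.symm⟩
  have htrclique : ∀ b, b ∉ A → IsCliqueF (Htr G A) (trF G A b) := by
    intro b hb
    constructor
    · obtain ⟨a, ha⟩ := hBnb b hb
      exact ⟨a, (mem_trF G A b a).mpr ha⟩
    · intro x hx y hy hxy
      exact ⟨hxy, b, hb, (mem_trF G A b x).mp hx, (mem_trF G A b y).mp hy⟩
  haveI instFA : Fintype ↥A := A.toFinite.fintype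
  haveI instDA : DecidableEq ↥A := Classical.decEq _
  refine ⟨↥A, instFA, instDA, Htr G A, fF G A, ?_, ?_, ?_, ?_, ?_⟩
  · -- connectivity
    exact Htr_connected G A B hconn hdisj hbip hAne
  · -- non-zero
    obtain ⟨b, hbB⟩ := hBne
    have hbA := hBnA b hbB
    exact ⟨trF G A b, htrclique b hbA, fF_pos G A hbA rfl⟩
  · -- condition (1)
    intro u v huv _
    obtain ⟨hne, b, hbA, hub, hvb⟩ := huv
    exact ⟨trF G A b, htrclique b hbA, (mem_trF G A b u).mpr hub,
      (mem_trF G A b v).mpr hvb, fF_pos G A hbA rfl⟩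
  · -- condition (2)
    intro u v huv hfu hfv
    by_contra hflt
    push_neg at hflt
    obtain ⟨hune, b, hbA, hub, hvb⟩ := huv
    obtain ⟨b0, hb0A, hb0u, hb0v, hb0uniq⟩ :
        ∃ b0 : W, b0 ∉ A ∧ G.Adj ↑u b0 ∧ G.Adj ↑v b0 ∧
          ∀ b' : W, b' ∉ A → b' ≠ b0 → trF G A b' ≠ {u, v} := by
      by_cases hex2 : ∃ b' : W, b' ∉ A ∧ trF G A b' = ({u, v} : Finset ↥A)
      · obtain ⟨b', hb'A, hb'tr⟩ := hex2
        refine ⟨b', hb'A, ?_, ?_, ?_⟩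
        · exact (mem_trF G A b' u).mp (by rw [hb'tr]; simp)
        · exact (mem_trF G A b' v).mp (by rw [hb'tr]; simp)
        · intro b'' hb''A hb''ne htr''
          have := fF_two_le G A hb''A hb'A hb''ne htr'' hb'tr
          omega
      · push_neg at hex2
        exact ⟨b, hbA, hub, hvb, fun b' hb' _ => hex2 b' hb'⟩
    have hDdom : IsDomSet G ((A \ {(↑u : W), ↑v}) ∪ {b0}) := by
      intro w hw
      by_cases hwA : w ∈ A
      · have hw2 : w = ↑u ∨ w = ↑v := by
          by_contra hc
          push_neg at hc
          exact hw (Or.inl ⟨hwA, by simp [hc.1, hc.2]⟩)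
        refine ⟨b0, Or.inr rfl, ?_⟩
        rcases hw2 with rfl | rfl
        · exact hb0u.symm
        · exact hb0v.symm
      · have hwb0 : w ≠ b0 := fun hc => hw (Or.inr (by simp [hc]))
        have htrne : trF G A w ≠ {u, v} := hb0uniq w hwA hwb0
        have hz : ∃ z : ↥A, G.Adj ↑z w ∧ z ≠ u ∧ z ≠ v := by
          by_contra hc
          push_neg at hc
          have hsub : trF G A w ⊆ {u, v} := by
            intro z hzin
            have hadj := (mem_trF G A w z).mp hzin
            by_cases hzu : z = u
            · simp [hzu]
            · simp [hc z hadj hzu]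
          obtain ⟨a, ha⟩ := hBnb w hwA
          have hane : (trF G A w).Nonempty := ⟨a, (mem_trF G A w a).mpr ha⟩
          have humem : u ∈ trF G A w := by
            by_contra hu
            have hsubv : trF G A w ⊆ {v} := by
              intro z hzin
              have hz2 := hsub hzin
              simp only [Finset.mem_insert, Finset.mem_singleton] at hz2 ⊢
              rcases hz2 with rfl | rfl
              · exact absurd hzin hu
              · rfl
            have htreq : trF G A w = {v} := by
              rcases Finset.subset_singleton_iff.mp hsubv with h | h
              · rw [h] at hane
                exact absurd hane (by simp)
              · exact h
            have := fF_pos G A hwA htreq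
            omega
          have hvmem : v ∈ trF G A w := by
            by_contra hv
            have hsubu : trF G A w ⊆ {u} := by
              intro z hzin
              have hz2 := hsub hzin
              simp only [Finset.mem_insert, Finset.mem_singleton] at hz2 ⊢
              rcases hz2 with rfl | rfl
              · rfl
              · exact absurd hzin hv
            have htreq : trF G A w = {u} := by
              rcases Finset.subset_singleton_iff.mp hsubu with h | h
              · rw [h] at hane
                exact absurd hane (by simp)
              · exact h
            have := fF_pos G A hwA htreq
            omega
          refine htrne (Finset.Subset.antisymm hsub ?_)
          intro z hz2
          simp only [Finset.mem_insert, Finset.mem_singleton] at hz2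
          rcases hz2 with rfl | rfl
          · exact humem
          · exact hvmem
        obtain ⟨z, hzadj, hzu, hzv⟩ := hz
        refine ⟨↑z, Or.inl ⟨z.2, ?_⟩, hzadj⟩
        simp only [Set.mem_insert_iff, Set.mem_singleton_iff]
        push_neg
        exact ⟨fun hc => hzu (Subtype.coe_injective hc),
          fun hc => hzv (Subtype.coe_injective hc)⟩
    have hcoe_ne : (↑u : W) ≠ ↑v := fun hc => hune (Subtype.coe_injective hc)
    have hsubpair : ({(↑u : W), ↑v} : Set W) ⊆ A := by
      intro x hx
      simp only [Set.mem_insert_iff, Set.mem_singleton_iff] at hx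
      rcases hx with rfl | rfl
      · exact u.2
      · exact v.2
    have hA2 : 2 ≤ A.ncard := by
      have := Set.ncard_le_ncard hsubpair A.toFinite
      rwa [Set.ncard_pair hcoe_ne] at this
    have hdisj2 : Disjoint (A \ {(↑u : W), ↑v}) ({b0} : Set W) := by
      simp only [Set.disjoint_singleton_right, Set.mem_diff]
      exact fun hc => hb0A hc.1
    have hDcard : ((A \ {(↑u : W), ↑v}) ∪ {b0}).ncard = A.ncard - 1 := by
      rw [Set.ncard_union_eq hdisj2 (Set.toFinite _) (Set.toFinite _),
        Set.ncard_diff hsubpair (Set.toFinite _), Set.ncard_pair hcoe_ne,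
        Set.ncard_singleton]
      omega
    have hle2 : domNum G ≤ A.ncard - 1 := Nat.sInf_le ⟨_, hDdom, hDcard⟩
    rw [hdom] at hle2
    omega
  · -- the isomorphism
    have fibEquiv : ∀ K : CliqueSet (Htr G A),
        {b : ↥(Aᶜ) // (⟨trF G A ↑b, htrclique ↑b b.2⟩ : CliqueSet (Htr G A)) = K} ≃
          Fin (fF G A K.1) := by
      intro K
      have h1 : {b : ↥(Aᶜ) // (⟨trF G A ↑b, htrclique ↑b b.2⟩ : CliqueSet (Htr G A)) = K} ≃
          {b : ↥(Aᶜ) // trF G A ↑b = K.1} :=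
        Equiv.subtypeEquivRight (fun b =>
          ⟨fun h => congrArg Subtype.val h, fun h => Subtype.ext h⟩)
      haveI : Fintype {b : ↥(Aᶜ) // trF G A ↑b = K.1} := Fintype.ofFinite _
      exact h1.trans (Fintype.equivFinOfCardEq Nat.card_eq_fintype_card.symm)
    obtain ⟨e1, he1fst⟩ : ∃ e1 : ↥(Aᶜ) ≃ (Σ K : CliqueSet (Htr G A), Fin (fF G A K.1)),
        ∀ b : ↥(Aᶜ), (e1 b).1.1 = trF G A ↑b := by
      refine ⟨(Equiv.sigmaFiberEquiv
        (fun b : ↥(Aᶜ) => (⟨trF G A ↑b, htrclique ↑b b.2⟩ : CliqueSet (Htr G A)))).symm.trans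
        (Equiv.sigmaCongrRight fibEquiv), fun b => rfl⟩
    obtain ⟨eW, heWA, heWB⟩ : ∃ eW : W ≃ BVert (Htr G A) (fF G A),
        (∀ (x : W) (hx : x ∈ A), eW x = Sum.inl ⟨x, hx⟩) ∧
        (∀ (x : W) (hx : x ∉ A), eW x = Sum.inr (e1 ⟨x, hx⟩)) := by
      refine ⟨(Equiv.Set.sumCompl A).symm.trans (Equiv.sumCongr (Equiv.refl ↥A) e1), ?_, ?_⟩
      · intro x hx
        simp [Equiv.Set.sumCompl_symm_apply_of_mem hx]
      · intro x hx
        simp [Equiv.Set.sumCompl_symm_apply_of_notMem hx]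
    refine ⟨⟨eW, ?_⟩⟩
    intro a b
    constructor
    · rintro (⟨x, p, h1, h2, hx⟩ | ⟨x, p, h1, h2, hx⟩)
      · by_cases ha : a ∈ A
        case neg => rw [heWB a ha] at h1; exact absurd h1 (by simp)
        by_cases hb : b ∈ A
        case pos => rw [heWA b hb] at h2; exact absurd h2 (by simp)
        rw [heWA a ha] at h1
        rw [heWB b hb] at h2
        obtain rfl : (⟨a, ha⟩ : ↥A) = x := Sum.inl_injective h1
        obtain rfl : e1 ⟨b, hb⟩ = p := Sum.inr_injective h2
        rw [he1fst] at hx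
        exact (mem_trF G A b _).mp hx
      · by_cases hb : b ∈ A
        case neg => rw [heWB b hb] at h1; exact absurd h1 (by simp)
        by_cases ha : a ∈ A
        case pos => rw [heWA a ha] at h2; exact absurd h2 (by simp)
        rw [heWA b hb] at h1
        rw [heWB a ha] at h2
        obtain rfl : (⟨b, hb⟩ : ↥A) = x := Sum.inl_injective h1
        obtain rfl : e1 ⟨a, ha⟩ = p := Sum.inr_injective h2
        rw [he1fst] at hx
        exact ((mem_trF G A a _).mp hx).symm
    · intro hab
      rcases hbip a b hab with ⟨haA, hbB⟩ | ⟨haB, hbA⟩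
      · have hbA : b ∉ A := hBnA b hbB
        refine Or.inl ⟨⟨a, haA⟩, e1 ⟨b, hbA⟩, heWA a haA, heWB b hbA, ?_⟩
        rw [he1fst]
        exact (mem_trF G A b ⟨a, haA⟩).mpr hab
      · have haA : a ∉ A := hBnA a haB
        refine Or.inr ⟨⟨b, hbA⟩, e1 ⟨a, haA⟩, heWA b hbA, heWB a haA, ?_⟩
        rw [he1fst]
        exact (mem_trF G A a ⟨b, hbA⟩).mpr hab.symm

/-! ### Backward direction -/

lemma backward_dir (W : Type) [Fintype W] (G : SimpleGraph W)
    (A B : Set W) (hconn : G.Connected)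
    (hdisj : Disjoint A B) (hcover : A ∪ B = Set.univ)
    (hbip : ∀ u v : W, G.Adj u v → (u ∈ A ∧ v ∈ B) ∨ (u ∈ B ∧ v ∈ A))
    (hA : 1 ≤ A.ncard) (hAB : A.ncard ≤ B.ncard)
    (hex : ∃ (U : Type) (_ : Fintype U) (_ : DecidableEq U) (H : SimpleGraph U)
      (f : Finset U → ℕ),
      H.Connected ∧
      (∃ K : Finset U, IsCliqueF H K ∧ 1 ≤ f K) ∧
      (∀ u v : U, H.Adj u v → f {u, v} = 0 →
        ∃ K : Finset U, IsCliqueF H K ∧ u ∈ K ∧ v ∈ K ∧ 0 < f K) ∧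
      (∀ u v : U, H.Adj u v → f {u} = 0 → f {v} = 0 → 2 ≤ f {u, v}) ∧
      Nonempty (G ≃g Bip H f)) :
    domNum G = A.ncard := by
  classical
  obtain ⟨U, instF, instD, H, f, hHconn, hnz, hc1, hc2, ⟨e⟩⟩ := hex
  have hAne : A.Nonempty := Set.nonempty_of_ncard_ne_zero (by omega)
  have hAcomp : ∀ x, x ∉ A → x ∈ B := by
    intro x hx
    have hx2 : x ∈ A ∪ B := hcover ▸ Set.mem_univ x
    simp only [Set.mem_union] at hx2
    tauto
  have hBnA : ∀ x, x ∈ B → x ∉ A := fun x hx hxA => (Set.disjoint_left.mp hdisj hxA) hx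
  -- `A` is a dominating set, hence `domNum G ≤ A.ncard`
  have hAdom : IsDomSet G A := by
    intro v hv
    have hvB : v ∈ B := hAcomp v hv
    obtain ⟨a0, ha0⟩ := hAne
    have hva : v ≠ a0 := fun hc => (hBnA v hvB) (hc ▸ ha0)
    obtain ⟨z, hz⟩ := exists_adj_of_connected hconn hva
    rcases hbip v z hz with ⟨hvA, _⟩ | ⟨_, hzA⟩
    · exact absurd hvA hv
    · exact ⟨z, hzA, hz.symm⟩
  have hle : domNum G ≤ A.ncard := Nat.sInf_le ⟨A, hAdom, rfl⟩
  -- the domination number of `G` is the number of vertices of `H`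
  have hGU : domNum G = Fintype.card U := (domNum_iso e).trans (domNum_bip H f hc2)
  -- the two 2-colorings of `G`
  set q : W → Prop := fun w => ∃ u : U, e w = Sum.inl u with hqdef
  have hpflip : ∀ x y, G.Adj x y → ((x ∈ A) ↔ ¬ (y ∈ A)) := by
    intro x y hxy
    rcases hbip x y hxy with ⟨hx, hy⟩ | ⟨hx, hy⟩
    · exact ⟨fun _ => hBnA y hy, fun _ => hx⟩
    · exact ⟨fun hxA => absurd hxA (hBnA x hx), fun hny => absurd hy hny⟩
  have hqflip : ∀ x y, G.Adj x y → (q x ↔ ¬ q y) := by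
    intro x y hxy
    have hadj : (Bip H f).Adj (e x) (e y) := e.map_adj_iff.mpr hxy
    rcases hadj with ⟨xx, p, h1, h2, _⟩ | ⟨xx, p, h1, h2, _⟩
    · refine ⟨fun _ => ?_, fun _ => ⟨xx, h1⟩⟩
      rintro ⟨u, hu⟩
      rw [h2] at hu
      exact absurd hu (by simp)
    · refine ⟨fun hqx => ?_, fun hnqy => absurd ⟨xx, h1⟩ hnqy⟩
      obtain ⟨u, hu⟩ := hqx
      rw [h2] at hu
      exact absurd hu (by simp)
  -- the cardinality of the `q`-part
  have hqcard : {w | q w}.ncard = Fintype.card U := by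
    have hset : {w | q w} = ⇑e ⁻¹' (Set.range Sum.inl) := by
      ext w
      simp only [hqdef, Set.mem_setOf_eq, Set.mem_preimage, Set.mem_range]
      exact ⟨fun ⟨u, hu⟩ => ⟨u, hu.symm⟩, fun ⟨u, hu⟩ => ⟨u, hu.symm⟩⟩
    have hpre : ⇑e ⁻¹' (Set.range Sum.inl) = ⇑e.symm '' (Set.range Sum.inl) := by
      ext w
      constructor
      · intro hw
        exact ⟨e w, hw, by simp⟩
      · rintro ⟨z, hz, rfl⟩
        simpa using hz
    rw [hset, hpre, Set.ncard_image_of_injective _ e.symm.injective,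
      ncard_range_inl H f]
  obtain ⟨a0, ha0⟩ := hAne
  by_cases hq0 : q a0
  · -- `A` is the `inl` part
    have hAq : A = {w | q w} := by
      ext y
      obtain ⟨wk⟩ := hconn.preconnected a0 y
      have hpar := walk_parity G (· ∈ A) q hpflip hqflip wk
      simp only [Set.mem_setOf_eq]
      tauto
    rw [hGU, ← hqcard, hAq]
  · -- `A` is the `inr` part; sizes squeeze
    have hAq : A = {w | ¬ q w} := by
      ext y
      obtain ⟨wk⟩ := hconn.preconnected a0 y
      have hpar := walk_parity G (· ∈ A) q hpflip hqflip wk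
      simp only [Set.mem_setOf_eq]
      tauto
    have hBq : B = {w | q w} := by
      ext y
      constructor
      · intro hy
        by_contra hny
        have : y ∈ A := by rw [hAq]; exact hny
        exact hBnA y hy this
      · intro hy
        refine hAcomp y ?_
        rw [hAq]
        simp only [Set.mem_setOf_eq]
        exact fun hc => hc hy
    have hBcard : B.ncard = Fintype.card U := by rw [hBq, hqcard]
    omega

end AuxLemmas

theorem domNum_eq_card_iff_bipartization (W : Type) [Fintype W] (G : SimpleGraph W)
    (A B : Set W) (hconn : G.Connected)
    (hdisj : Disjoint A B) (hcover : A ∪ B = Set.univ)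
    (hbip : ∀ u v : W, G.Adj u v → (u ∈ A ∧ v ∈ B) ∨ (u ∈ B ∧ v ∈ A))
    (hA : 1 ≤ A.ncard) (hAB : A.ncard ≤ B.ncard) :
    domNum G = A.ncard ↔
      ∃ (U : Type) (_ : Fintype U) (_ : DecidableEq U) (H : SimpleGraph U)
        (f : Finset U → ℕ),
        H.Connected ∧
        (∃ K : Finset U, IsCliqueF H K ∧ 1 ≤ f K) ∧
        (∀ u v : U, H.Adj u v → f {u, v} = 0 →
          ∃ K : Finset U, IsCliqueF H K ∧ u ∈ K ∧ v ∈ K ∧ 0 < f K) ∧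
        (∀ u v : U, H.Adj u v → f {u} = 0 → f {v} = 0 → 2 ≤ f {u, v}) ∧
        Nonempty (G ≃g Bip H f) := by
  exact ⟨fun h => forward_dir W G A B hconn hdisj hcover hbip hA hAB h,
    fun h => backward_dir W G A B hconn hdisj hcover hbip hA hAB h⟩
end

section
/- Let H be a connected finite simple graph and f : 𝒦_H → ℕ a non-zero function such that: (1) whenever uv is an edge of H with f(H[u,v]) = 0, there exists a complete subgraph H′ of H containing the edge uv with f(H′) > 0; and (2) whenever uv is an edge of H with f(H[u]) = f(H[v]) = 0, one has f(H[u,v]) ≥ 2. Then the bipartization B_f(H) = ((A,B),E) has a matching saturating A; in particular |A| ≤ |B|. -/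
theorem bip_saturating_matching {V : Type*} [Fintype V] [DecidableEq V]
    (H : SimpleGraph V) (f : Finset V → ℕ) (hconn : H.Connected)
    (hnz : ∃ K : Finset V, IsCliqueF H K ∧ 1 ≤ f K)
    (h1 : ∀ u v : V, H.Adj u v → f {u, v} = 0 →
      ∃ K : Finset V, IsCliqueF H K ∧ u ∈ K ∧ v ∈ K ∧ 0 < f K)
    (h2 : ∀ u v : V, H.Adj u v → f {u} = 0 → f {v} = 0 → 2 ≤ f {u, v}) :
    (∃ M : (Bip H f).Subgraph, M.IsMatching ∧ ∀ x : V, Sum.inl x ∈ M.verts) ∧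
      Nat.card V ≤ Nat.card (Σ K : CliqueSet H, Fin (f K.1)) := by
  classical
  obtain ⟨K₀, hK₀, hfK₀⟩ := hnz
  set e := Fintype.equivFin V with he
  -- singleton cliques
  have hsing : ∀ v : V, IsCliqueF H {v} := by
    intro v
    refine ⟨Finset.singleton_nonempty v, ?_⟩
    intro x hx y hy hxy
    rw [Finset.mem_singleton] at hx hy
    subst hx; subst hy; exact absurd rfl hxy
  -- edge cliques
  have hedge : ∀ v u : V, H.Adj v u → IsCliqueF H {v, u} := by
    intro v u hadj
    refine ⟨⟨v, by simp⟩, ?_⟩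
    intro x hx y hy hxy
    simp only [Finset.mem_insert, Finset.mem_singleton] at hx hy
    rcases hx with rfl | rfl <;> rcases hy with rfl | rfl
    · exact absurd rfl hxy
    · exact hadj
    · exact hadj.symm
    · exact absurd rfl hxy
  -- every vertex with zero singleton value has a neighbor
  have hnbr : ∀ v : V, f {v} = 0 → ∃ u, H.Adj v u := by
    intro v hfv
    by_contra hno
    push_neg at hno
    have hall : ∀ u : V, u = v := by
      intro u
      by_contra hne
      obtain ⟨w⟩ := hconn.preconnected v u
      cases w with
      | nil => exact hne rfl
      | cons h _ => exact hno _ h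
    have hK0 : K₀ = {v} := by
      obtain ⟨x, hx⟩ := hK₀.1
      apply Finset.eq_singleton_iff_unique_mem.mpr
      exact ⟨(hall x) ▸ hx, fun y _ => hall y⟩
    rw [hK0, hfv] at hfK₀
    omega
  -- existence of a spec'd assignment for every vertex
  have hex : ∀ v : V, ∃ p : Σ K : CliqueSet H, Fin (f K.1),
      v ∈ p.1.1 ∧
      ((p.1.1 = {v}) ∨
       (f {v} = 0 ∧ ∃ u, u ≠ v ∧ p.1.1 = {v, u} ∧
          ((p.2 : ℕ) = if e v < e u then 0 else 1)) ∨
       (f {v} = 0 ∧ ∀ w ∈ p.1.1, f {w} = 0 → w = v)) := by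
    intro v
    by_cases hfv : f {v} = 0
    · by_cases hZ : ∃ u, H.Adj v u ∧ f {u} = 0
      · obtain ⟨u, hadj, hfu⟩ := hZ
        have hf2 : 2 ≤ f {v, u} := h2 v u hadj hfv hfu
        refine ⟨⟨⟨{v, u}, hedge v u hadj⟩, ⟨if e v < e u then 0 else 1, ?_⟩⟩,
          by simp, Or.inr (Or.inl ⟨hfv, u, hadj.ne', rfl, rfl⟩)⟩
        show (if e v < e u then 0 else 1) < f {v, u}
        split <;> omega
      · push_neg at hZ
        obtain ⟨u, hadj⟩ := hnbr v hfv
        by_cases hfe : f {v, u} = 0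
        · obtain ⟨K, hK, hvK, huK, hfK⟩ := h1 v u hadj hfe
          refine ⟨⟨⟨K, hK⟩, ⟨0, hfK⟩⟩, hvK, Or.inr (Or.inr ⟨hfv, ?_⟩)⟩
          intro w hw hfw
          by_contra hne
          exact hZ w (hK.2 v hvK w hw (Ne.symm hne)) hfw
        · refine ⟨⟨⟨{v, u}, hedge v u hadj⟩, ⟨0, Nat.pos_of_ne_zero hfe⟩⟩,
            by simp, Or.inr (Or.inr ⟨hfv, ?_⟩)⟩
          intro w hw hfw
          simp only [Finset.mem_insert, Finset.mem_singleton] at hw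
          rcases hw with rfl | rfl
          · rfl
          · exact absurd hfw (hZ w hadj)
    · exact ⟨⟨⟨{v}, hsing v⟩, ⟨0, Nat.pos_of_ne_zero hfv⟩⟩,
        Finset.mem_singleton_self v, Or.inl rfl⟩
  choose g hg1 hg2 using hex
  have hginj : Function.Injective g := by
    intro v w hvw
    have hvK : v ∈ (g w).1.1 := hvw ▸ hg1 v
    have hwK : w ∈ (g v).1.1 := hvw.symm ▸ hg1 w
    rcases hg2 v with hv1 | ⟨hfv2, u, hune, hKv, hiv⟩ | ⟨hfv2, hv3⟩
    · exact (Finset.mem_singleton.mp (hv1 ▸ hwK)).symm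
    · rcases hg2 w with hw1 | ⟨hfw2, u', hune', hKw, hiw⟩ | ⟨hfw2, hw3⟩
      · exact Finset.mem_singleton.mp (hw1 ▸ hvK)
      · by_contra hne
        have hsets : ({v, u} : Finset V) = {w, u'} := by rw [← hKv, hvw, hKw]
        have hvmem : v ∈ ({w, u'} : Finset V) := hsets ▸ (by simp)
        have hwmem : w ∈ ({v, u} : Finset V) := hsets.symm ▸ (by simp)
        simp only [Finset.mem_insert, Finset.mem_singleton] at hvmem hwmem
        have hveq : v = u' := by
          rcases hvmem with h | h
          · exact absurd h hne
          · exact h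
        have hweq : w = u := by
          rcases hwmem with h | h
          · exact absurd h.symm hne
          · exact h
        have hii : ((g v).2 : ℕ) = ((g w).2 : ℕ) := by rw [hvw]
        rw [hiv, hiw, ← hveq, ← hweq] at hii
        rcases lt_trichotomy (e v) (e w) with h | h | h
        · rw [if_pos h, if_neg (asymm h)] at hii
          simp at hii
        · exact hne (e.injective h)
        · rw [if_neg (asymm h), if_pos h] at hii
          simp at hii
      · exact hw3 v hvK hfv2
    · rcases hg2 w with hw1 | ⟨hfw2, u', hune', hKw, hiw⟩ | ⟨hfw2, hw3⟩
      · exact Finset.mem_singleton.mp (hw1 ▸ hvK)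
      · exact (hv3 w hwK hfw2).symm
      · exact (hv3 w hwK hfw2).symm
  constructor
  · refine ⟨{ verts := Set.range Sum.inl ∪ Set.range (fun v => Sum.inr (g v)),
              Adj := fun a b => ∃ v, (a = Sum.inl v ∧ b = Sum.inr (g v)) ∨
                (b = Sum.inl v ∧ a = Sum.inr (g v)),
              adj_sub := ?_, edge_vert := ?_, symm := ?_ }, ?_, ?_⟩
    · rintro a b ⟨v, ⟨rfl, rfl⟩ | ⟨rfl, rfl⟩⟩
      · exact Or.inl ⟨v, g v, rfl, rfl, hg1 v⟩
      · exact Or.inr ⟨v, g v, rfl, rfl, hg1 v⟩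
    · rintro a b ⟨v, ⟨rfl, rfl⟩ | ⟨rfl, rfl⟩⟩
      · exact Or.inl ⟨v, rfl⟩
      · exact Or.inr ⟨v, rfl⟩
    · constructor
      rintro a b ⟨v, h | h⟩
      · exact ⟨v, Or.inr h⟩
      · exact ⟨v, Or.inl h⟩
    · intro x hx
      rcases hx with ⟨v, rfl⟩ | ⟨v, rfl⟩
      · refine ⟨Sum.inr (g v), ⟨v, Or.inl ⟨rfl, rfl⟩⟩, ?_⟩
        rintro y ⟨v', ⟨hv', rfl⟩ | ⟨rfl, hv'⟩⟩
        · rw [Sum.inl.inj hv']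
        · exact absurd hv' (by simp)
      · refine ⟨Sum.inl v, ⟨v, Or.inr ⟨rfl, rfl⟩⟩, ?_⟩
        rintro y ⟨v', ⟨hv', h2'⟩ | ⟨rfl, h2'⟩⟩
        · exact absurd hv' (by simp)
        · rw [hginj (Sum.inr.inj h2').symm]
    · intro x
      exact Or.inl ⟨x, rfl⟩
  · exact Nat.card_le_card_of_injective g hginj
end

section
/- Let H be a connected finite simple graph and f : 𝒦_H → ℕ a non-zero function such that: (1) whenever uv is an edge of H with f(H[u,v]) = 0, there exists a complete subgraph H′ of H containing the edge uv with f(H′) > 0; and (2) whenever uv is an edge of H with f(H[u]) = f(H[v]) = 0, one has f(H[u,v]) ≥ 2. Then the domination number of the bipartization B_f(H) = ((A,B),E) equals |A|, i.e., γ(B_f(H)) = |A| = |V_H|. -/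
section BipAux

variable {V : Type*} [Fintype V] [DecidableEq V] (H : SimpleGraph V) (f : Finset V → ℕ)

lemma cliqueF_single (v : V) : IsCliqueF H {v} := by
  refine ⟨⟨v, Finset.mem_singleton_self v⟩, ?_⟩
  intro x hx y hy hxy
  simp only [Finset.mem_singleton] at hx hy
  exact absurd (hx.trans hy.symm) hxy

lemma cliqueF_pair {v u : V} (h : H.Adj v u) : IsCliqueF H {v, u} := by
  refine ⟨⟨v, by simp⟩, ?_⟩
  intro x hx y hy hxy
  simp only [Finset.mem_insert, Finset.mem_singleton] at hx hy
  rcases hx with rfl | rfl <;> rcases hy with rfl | rfl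
  · exact absurd rfl hxy
  · exact h
  · exact h.symm
  · exact absurd rfl hxy

lemma bip_adj_iff (a b : BVert H f) : (Bip H f).Adj a b ↔
    ((∃ (x : V) (p : Σ K : CliqueSet H, Fin (f K.1)),
        a = Sum.inl x ∧ b = Sum.inr p ∧ x ∈ p.1.1) ∨
     (∃ (x : V) (p : Σ K : CliqueSet H, Fin (f K.1)),
        b = Sum.inl x ∧ a = Sum.inr p ∧ x ∈ p.1.1)) := Iff.rfl

lemma bip_adj_inl {a : BVert H f} {v : V} (h : (Bip H f).Adj a (Sum.inl v)) :
    ∃ p : Σ K : CliqueSet H, Fin (f K.1), a = Sum.inr p ∧ v ∈ p.1.1 := by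
  rw [bip_adj_iff] at h
  rcases h with ⟨x, p, h1, h2, hx⟩ | ⟨x, p, h1, h2, hx⟩
  · exact absurd h2 (by simp)
  · obtain rfl : v = x := by injection h1
    exact ⟨p, h2, hx⟩

lemma bip_adj_inr {a : BVert H f} {p : Σ K : CliqueSet H, Fin (f K.1)}
    (h : (Bip H f).Adj a (Sum.inr p)) : ∃ x : V, a = Sum.inl x ∧ x ∈ p.1.1 := by
  rw [bip_adj_iff] at h
  rcases h with ⟨x, q, h1, h2, hx⟩ | ⟨x, q, h1, h2, hx⟩
  · obtain rfl : p = q := by injection h2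
    exact ⟨x, h1, hx⟩
  · exact absurd h1 (by simp)

lemma forced_copy (D : Set (BVert H f)) (hD : IsDomSet (Bip H f) D)
    (p : Σ K : CliqueSet H, Fin (f K.1)) (h : ∀ x ∈ p.1.1, Sum.inl x ∉ D) :
    Sum.inr p ∈ D := by
  by_contra hb
  obtain ⟨u, hu, hadj⟩ := hD _ hb
  obtain ⟨x, rfl, hx⟩ := bip_adj_inr H f hadj
  exact h x hx hu

lemma dom_of_inl (D : Set (BVert H f)) (hD : IsDomSet (Bip H f) D) {v : V}
    (h : Sum.inl v ∉ D) :
    ∃ p : Σ K : CliqueSet H, Fin (f K.1), Sum.inr p ∈ D ∧ v ∈ p.1.1 := by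
  obtain ⟨u, hu, hadj⟩ := hD _ h
  obtain ⟨p, rfl, hp⟩ := bip_adj_inl H f hadj
  exact ⟨p, hu, hp⟩

/-- `v` has a neighbour `u` with `inl u ∉ D` and `f {u} = 0`. -/
def P2aux (D : Set (BVert H f)) (v : V) : Prop :=
  ∃ u, u ≠ v ∧ H.Adj v u ∧ Sum.inl u ∉ D ∧ f {u} = 0

/-- The tag relating a vertex `v` to the clique-copy chosen for it. -/
def Tagaux (D : Set (BVert H f)) (e : V → ℕ) (v : V)
    (p : Σ K : CliqueSet H, Fin (f K.1)) : Prop :=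
  (p.1.1 = {v} ∧ Sum.inl v ∉ D) ∨
  (∃ u, p.1.1 = {v, u} ∧ u ≠ v ∧ Sum.inl v ∉ D ∧ Sum.inl u ∉ D ∧ f {v} = 0 ∧ f {u} = 0 ∧
    (((p.2 : ℕ) = 0) ↔ e v < e u)) ∨
  (v ∈ p.1.1 ∧ Sum.inl v ∉ D ∧ f {v} = 0 ∧ ¬ P2aux H f D v)

lemma bip_dom_lower
    (h2 : ∀ u v : V, H.Adj u v → f {u} = 0 → f {v} = 0 → 2 ≤ f {u, v})
    (D : Set (BVert H f)) (hD : IsDomSet (Bip H f) D) : Nat.card V ≤ D.ncard := by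
  classical
  set e : V → ℕ := fun v => (Fintype.equivFin V v : ℕ) with he
  have einj : Function.Injective e := by
    intro a b h
    exact (Fintype.equivFin V).injective (Fin.val_injective h)
  have hex : ∀ v : V, ∃ b : BVert H f, b ∈ D ∧
      (b = Sum.inl v ∨ ∃ p, b = Sum.inr p ∧ Tagaux H f D e v p) := by
    intro v
    by_cases h0 : Sum.inl v ∈ D
    · exact ⟨Sum.inl v, h0, Or.inl rfl⟩
    by_cases hf1 : 1 ≤ f {v}
    · refine ⟨Sum.inr ⟨⟨{v}, cliqueF_single H v⟩, ⟨0, hf1⟩⟩, ?_, Or.inr ⟨_, rfl, Or.inl ⟨rfl, h0⟩⟩⟩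
      refine forced_copy H f D hD _ ?_
      intro x hx
      obtain rfl : x = v := Finset.mem_singleton.mp hx
      exact h0
    have hf0 : f {v} = 0 := by omega
    by_cases hp2 : P2aux H f D v
    · obtain ⟨u, hune, hadj, huD, hfu⟩ := hp2
      have hff : 2 ≤ f {v, u} := h2 v u hadj hf0 hfu
      refine ⟨Sum.inr ⟨⟨{v, u}, cliqueF_pair H hadj⟩,
          (if e v < e u then ⟨0, by omega⟩ else ⟨1, by omega⟩ : Fin (f {v, u}))⟩, ?_,
          Or.inr ⟨_, rfl, ?_⟩⟩
      · refine forced_copy H f D hD _ ?_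
        intro x hx
        rcases Finset.mem_insert.mp hx with rfl | hx
        · exact h0
        · obtain rfl : x = u := Finset.mem_singleton.mp hx
          exact huD
      · refine Or.inr (Or.inl ⟨u, rfl, hune, h0, huD, hf0, hfu, ?_⟩)
        by_cases hlt : e v < e u <;> simp [hlt]
    · obtain ⟨p, hpD, hvp⟩ := dom_of_inl H f D hD h0
      exact ⟨Sum.inr p, hpD, Or.inr ⟨p, rfl, Or.inr (Or.inr ⟨hvp, h0, hf0, hp2⟩)⟩⟩
  set Ψ : V → BVert H f := fun v => Classical.choose (hex v) with hΨ
  have hmem : ∀ v, Ψ v ∈ D := fun v => (Classical.choose_spec (hex v)).1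
  have hspec : ∀ v, Ψ v = Sum.inl v ∨ ∃ p, Ψ v = Sum.inr p ∧ Tagaux H f D e v p :=
    fun v => (Classical.choose_spec (hex v)).2
  have hinj : Function.Injective Ψ := by
    intro v w hvw
    by_contra hne
    have sv := hspec v
    have sw := hspec w
    rw [hvw] at sv
    rcases sv with sv | ⟨p, hp, tv⟩ <;> rcases sw with sw | ⟨q, hq, tw⟩
    · rw [sw] at sv; exact hne (Sum.inl_injective sv).symm
    · rw [hq] at sv; exact absurd sv (by simp)
    · rw [sw] at hp; exact absurd hp.symm (by simp)
    rw [hp] at hq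
    obtain rfl : p = q := Sum.inr_injective hq
    clear hp hq hvw
    have hcl := p.1.2.2
    rcases tv with ⟨hK, hvD⟩ | ⟨u, hK, hune, hvD, huD, hfv, hfu, hiff⟩ | ⟨hvK, hvD, hfv, hnp2⟩ <;>
      rcases tw with ⟨hK', hwD⟩ | ⟨u', hK', hune', hwD, huD', hfw, hfu', hiff'⟩ |
        ⟨hwK, hwD, hfw, hnp2'⟩
    -- T2 T2
    · rw [hK] at hK'
      exact hne (Finset.singleton_injective hK')
    -- T2 T3
    · rw [hK] at hK'
      have hw : w ∈ ({v} : Finset V) := by rw [hK']; exact Finset.mem_insert_self w {u'}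
      have hu : u' ∈ ({v} : Finset V) := by rw [hK']; simp
      rw [Finset.mem_singleton] at hw hu
      exact hune' (hu.trans hw.symm)
    -- T2 T4
    · rw [hK] at hwK
      exact hne (Finset.mem_singleton.mp hwK).symm
    -- T3 T2
    · rw [hK'] at hK
      have hv : v ∈ ({w} : Finset V) := by rw [hK]; exact Finset.mem_insert_self v {u}
      have hu : u ∈ ({w} : Finset V) := by rw [hK]; simp
      rw [Finset.mem_singleton] at hv hu
      exact hune (hu.trans hv.symm)
    -- T3 T3
    · have hv : v ∈ ({w, u'} : Finset V) := by rw [← hK', hK]; exact Finset.mem_insert_self v {u}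
      have hw : w ∈ ({v, u} : Finset V) := by rw [← hK, hK']; exact Finset.mem_insert_self w {u'}
      obtain rfl : v = u' := by
        rcases Finset.mem_insert.mp hv with h | h
        · exact absurd h hne
        · exact Finset.mem_singleton.mp h
      obtain rfl : w = u := by
        rcases Finset.mem_insert.mp hw with h | h
        · exact absurd h (Ne.symm hne)
        · exact Finset.mem_singleton.mp h
      rcases Nat.lt_trichotomy (e v) (e w) with hlt | heq | hgt
      · exact absurd hlt (by have := hiff'.mp (hiff.mpr hlt); omega)
      · exact hne (einj heq)
      · exact absurd hgt (by have := hiff.mp (hiff'.mpr hgt); omega)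
    -- T3 T4
    · have hw : w ∈ ({v, u} : Finset V) := by rw [← hK]; exact hwK
      obtain rfl : w = u := by
        rcases Finset.mem_insert.mp hw with h | h
        · exact absurd h (Ne.symm hne)
        · exact Finset.mem_singleton.mp h
      have hvK : v ∈ p.1.1 := by rw [hK]; exact Finset.mem_insert_self v {w}
      have hadj : H.Adj w v := hcl w hwK v hvK hune
      exact hnp2' ⟨v, Ne.symm hune, hadj, hvD, hfv⟩
    -- T4 T2
    · rw [hK'] at hvK
      exact hne (Finset.mem_singleton.mp hvK)
    -- T4 T3
    · have hv : v ∈ ({w, u'} : Finset V) := by rw [← hK']; exact hvK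
      obtain rfl : v = u' := by
        rcases Finset.mem_insert.mp hv with h | h
        · exact absurd h hne
        · exact Finset.mem_singleton.mp h
      have hwK : w ∈ p.1.1 := by rw [hK']; exact Finset.mem_insert_self w {v}
      have hadj : H.Adj v w := hcl v hvK w hwK hune'
      exact hnp2 ⟨w, Ne.symm hune', hadj, hwD, hfw⟩
    -- T4 T4
    · have hadj : H.Adj v w := hcl v hvK w hwK hne
      exact hnp2 ⟨w, Ne.symm hne, hadj, hwD, hfw⟩
  have hsub : Ψ '' Set.univ ⊆ D := by
    rintro b ⟨v, -, rfl⟩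
    exact hmem v
  calc Nat.card V = (Set.univ : Set V).ncard := (Set.ncard_univ V).symm
    _ = (Ψ '' Set.univ).ncard := (Set.ncard_image_of_injective _ hinj).symm
    _ ≤ D.ncard := Set.ncard_le_ncard hsub (Set.toFinite D)

end BipAux

theorem bip_domNum_eq {V : Type*} [Fintype V] [DecidableEq V]
    (H : SimpleGraph V) (f : Finset V → ℕ) (hconn : H.Connected)
    (hnz : ∃ K : Finset V, IsCliqueF H K ∧ 1 ≤ f K)
    (h1 : ∀ u v : V, H.Adj u v → f {u, v} = 0 →
      ∃ K : Finset V, IsCliqueF H K ∧ u ∈ K ∧ v ∈ K ∧ 0 < f K)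
    (h2 : ∀ u v : V, H.Adj u v → f {u} = 0 → f {v} = 0 → 2 ≤ f {u, v}) :
    domNum (Bip H f) = Nat.card V := by
  classical
  have hdom : IsDomSet (Bip H f) (Set.range (Sum.inl : V → BVert H f)) := by
    intro b hb
    match b with
    | Sum.inl v => exact absurd ⟨v, rfl⟩ hb
    | Sum.inr p =>
      obtain ⟨x, hx⟩ := p.1.2.1
      exact ⟨Sum.inl x, ⟨x, rfl⟩, (bip_adj_iff H f _ _).mpr (Or.inl ⟨x, p, rfl, rfl, hx⟩)⟩
  have hcard : (Set.range (Sum.inl : V → BVert H f)).ncard = Nat.card V := by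
    rw [← Set.image_univ, Set.ncard_image_of_injective _ Sum.inl_injective, Set.ncard_univ]
  apply le_antisymm
  · exact Nat.sInf_le ⟨_, hdom, hcard⟩
  · refine le_csInf ⟨_, _, hdom, hcard⟩ ?_
    rintro n ⟨D, hDdom, rfl⟩
    exact bip_dom_lower H f h2 D hDdom
end
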